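/- arXiv:1810.01372 — 3 statements merged into one kernel-verified Lean document; each statement's English description precedes it below -/
import Mathlib

section
/- In the Eisenberg–Noe setting (α_x = α_L = 1) under the regularity assumption (p̄_i > 0 and Σ_{j=1}^n π_{ij} < 1 for every i ≤ n), let X : Ω → ℝⁿ₊ be an integrable random endowment vector on a probability space (Ω, 𝓕, ℙ), let U be a random variable uniformly distributed on [0,1] on the same space, and let Z be the comonotonic version of X given by Z_i = F_{X_i}^{-1}(U), where F_{X_i}^{-1}(u) = inf{t ∈ ℝ₊ : ℙ(X_i ≤ t) ≥ u}. Then the total expected equity of the banking sector is maximized by the comonotonic endowments: Σ_{i=1}^n 𝔼[V_i(X)⁺] ≤ Σ_{i=1}^n 𝔼[V_i(Z)⁺]. -/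
open Matrix BigOperators MeasureTheory

noncomputable section

/-- Total liabilities `p̄_i = Σ_{j=1}^{n+1} L_{ij}`. -/
def pbar {n : ℕ} (L : Matrix (Fin n) (Fin (n + 1)) ℝ) (i : Fin n) : ℝ :=
  ∑ j, L i j

/-- Relative liabilities `π_{ij} = L_{ij} / p̄_i` if `p̄_i > 0`, else `0`. -/
def relLiab {n : ℕ} (L : Matrix (Fin n) (Fin (n + 1)) ℝ) (i j : Fin n) : ℝ :=
  if 0 < pbar L i then L i j.castSucc / pbar L i else 0

/-- `p` is the greatest clearing payment vector for endowments `x` in the Eisenberg–Noe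
setting: the greatest fixed point of `p ↦ p̄ ∧ (x + Πᵀ p)` on `[0, p̄]`. -/
def IsGreatestClearingPayment {n : ℕ} (L : Matrix (Fin n) (Fin (n + 1)) ℝ)
    (x p : Fin n → ℝ) : Prop :=
  IsGreatest {q : Fin n → ℝ | (∀ i, 0 ≤ q i ∧ q i ≤ pbar L i) ∧
    ∀ i, q i = min (pbar L i) (x i + ∑ j, relLiab L j i * q j)} p

section
open Filter
open scoped ENNReal
namespace ENProof



/-- A finite nonempty chain has a top element. -/
lemma exists_top {α : Type*} [PartialOrder α] (T : Finset α) (hne : T.Nonempty)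
    (hch : ∀ a ∈ T, ∀ b ∈ T, a ≤ b ∨ b ≤ a) : ∃ c ∈ T, ∀ v ∈ T, v ≤ c := by
  classical
  revert hch
  induction hne using Finset.Nonempty.cons_induction with
  | singleton a => exact fun _ => ⟨a, Finset.mem_singleton_self a, by simp⟩
  | cons a s ha hs ih =>
    intro hch
    obtain ⟨c, hc, hctop⟩ := ih (fun x hx y hy =>
      hch x (Finset.mem_cons_of_mem hx) y (Finset.mem_cons_of_mem hy))
    rcases hch a (Finset.mem_cons_self a s) c (Finset.mem_cons_of_mem hc) with h | h
    · exact ⟨c, Finset.mem_cons_of_mem hc, fun v hv => by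
        rcases Finset.mem_cons.1 hv with rfl | hv
        · exact h
        · exact hctop v hv⟩
    · exact ⟨a, Finset.mem_cons_self a s, fun v hv => by
        rcases Finset.mem_cons.1 hv with rfl | hv
        · exact le_rfl
        · exact (hctop v hv).trans h⟩



variable {V : Type*} [Fintype V] [DecidableEq V]

/-- weighted sum -/
def WS (f h : V → ℝ) : ℝ := ∑ v, f v * h v

/-- coordinate indicator -/
noncomputable def cind {n : ℕ} (val : V → (Fin n → ℝ)) (i : Fin n) (t : ℝ) : V → ℝ :=
  fun v => if val v i = t then 1 else 0

/-- marginal mass -/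
noncomputable def mrg {n : ℕ} (val : V → (Fin n → ℝ)) (w : V → ℝ) (i : Fin n) (t : ℝ) : ℝ :=
  WS w (cind val i t)

lemma WS_peel (f h : V → ℝ) (δ : ℝ) (c : V) :
    WS (fun v => f v - δ * (if v = c then 1 else 0)) h = WS f h - δ * h c := by
  classical
  unfold WS
  simp only [sub_mul]
  rw [Finset.sum_sub_distrib]
  congr 1
  have : ∀ v, δ * (if v = c then (1:ℝ) else 0) * h v = δ * (if v = c then h v else 0) := by
    intro v; by_cases h' : v = c <;> simp [h']
  simp only [this, ← Finset.mul_sum]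
  simp

lemma mrg_pos {n : ℕ} (val : V → (Fin n → ℝ)) (w : V → ℝ) (h0 : ∀ v, 0 ≤ w v)
    (v : V) (hv : w v ≠ 0) (i : Fin n) : 0 < mrg val w i (val v i) := by
  classical
  apply Finset.sum_pos'
  · intro u _
    apply mul_nonneg (h0 u)
    unfold cind; split <;> norm_num
  · refine ⟨v, Finset.mem_univ v, ?_⟩
    have : cind val i (val v i) v = 1 := by unfold cind; simp
    rw [this, mul_one]
    exact lt_of_le_of_ne (h0 v) (Ne.symm hv)

lemma mrg_ne_exists {n : ℕ} (val : V → (Fin n → ℝ)) (w : V → ℝ) (i : Fin n) (t : ℝ)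
    (h : mrg val w i t ≠ 0) : ∃ v, w v ≠ 0 ∧ val v i = t := by
  classical
  obtain ⟨v, _, hv⟩ := Finset.exists_ne_zero_of_sum_ne_zero h
  refine ⟨v, ?_, ?_⟩
  · intro h'; apply hv; simp [h']
  · by_contra h'
    apply hv
    unfold cind
    simp [h']

lemma eq_zero_of_mrg_zero {n : ℕ} (hn : 0 < n) (val : V → (Fin n → ℝ)) (w : V → ℝ)
    (h0 : ∀ v, 0 ≤ w v) (hm : ∀ i t, mrg val w i t = 0) : ∀ v, w v = 0 := by
  intro v
  by_contra hv
  exact absurd (hm ⟨0, hn⟩ (val v ⟨0, hn⟩)) (ne_of_gt (mrg_pos val w h0 v hv ⟨0, hn⟩))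

lemma chain_unique {n : ℕ} (hn : 0 < n) (val : V → (Fin n → ℝ))
    (hval : Function.Injective val) :
    ∀ (N : ℕ) (w w' : V → ℝ), (∀ v, 0 ≤ w v) → (∀ v, 0 ≤ w' v) →
    (∀ v v', w v ≠ 0 → w v' ≠ 0 → val v ≤ val v' ∨ val v' ≤ val v) →
    (∀ v v', w' v ≠ 0 → w' v' ≠ 0 → val v ≤ val v' ∨ val v' ≤ val v) →
    (∀ i t, mrg val w i t = mrg val w' i t) →
    (Finset.univ.filter (fun v => w v ≠ 0)).card
      + (Finset.univ.filter (fun v => w' v ≠ 0)).card ≤ N →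
    w = w' := by
  classical
  intro N
  induction N with
  | zero =>
    intro w w' h0 h0' hc hc' hm hcard
    have hw : ∀ v, w v = 0 := by
      intro v
      by_contra hv
      have : (Finset.univ.filter (fun v => w v ≠ 0)).card ≠ 0 := by
        rw [Finset.card_ne_zero]
        exact ⟨v, Finset.mem_filter.2 ⟨Finset.mem_univ v, hv⟩⟩
      omega
    have hw' : ∀ v, w' v = 0 := by
      intro v
      by_contra hv
      have : (Finset.univ.filter (fun v => w' v ≠ 0)).card ≠ 0 := by
        rw [Finset.card_ne_zero]
        exact ⟨v, Finset.mem_filter.2 ⟨Finset.mem_univ v, hv⟩⟩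
      omega
    funext v; rw [hw v, hw' v]
  | succ N ih =>
    intro w w' h0 h0' hc hc' hm hcard
    by_cases hWe : ∀ v, w v = 0
    · have hmz : ∀ i t, mrg val w' i t = 0 := by
        intro i t
        rw [← hm i t]
        unfold mrg WS
        apply Finset.sum_eq_zero
        intro v _; rw [hWe v, zero_mul]
      have hw' := eq_zero_of_mrg_zero hn val w' h0' hmz
      funext v; rw [hWe v, hw' v]
    by_cases hWe' : ∀ v, w' v = 0
    · have hmz : ∀ i t, mrg val w i t = 0 := by
        intro i t
        rw [hm i t]
        unfold mrg WS
        apply Finset.sum_eq_zero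
        intro v _; rw [hWe' v, zero_mul]
      exact absurd (eq_zero_of_mrg_zero hn val w h0 hmz) (by push_neg at hWe; tauto)
    push_neg at hWe hWe'
    -- tops of the two supports
    obtain ⟨v₀, hv₀⟩ := hWe
    obtain ⟨v₀', hv₀'⟩ := hWe'
    have hTch : ∀ a ∈ (Finset.univ.filter (fun v => w v ≠ 0)).image val,
        ∀ b ∈ (Finset.univ.filter (fun v => w v ≠ 0)).image val, a ≤ b ∨ b ≤ a := by
      intro a ha b hb
      obtain ⟨u, hu, rfl⟩ := Finset.mem_image.1 ha
      obtain ⟨u', hu', rfl⟩ := Finset.mem_image.1 hb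
      exact hc u u' (Finset.mem_filter.1 hu).2 (Finset.mem_filter.1 hu').2
    have hTch' : ∀ a ∈ (Finset.univ.filter (fun v => w' v ≠ 0)).image val,
        ∀ b ∈ (Finset.univ.filter (fun v => w' v ≠ 0)).image val, a ≤ b ∨ b ≤ a := by
      intro a ha b hb
      obtain ⟨u, hu, rfl⟩ := Finset.mem_image.1 ha
      obtain ⟨u', hu', rfl⟩ := Finset.mem_image.1 hb
      exact hc' u u' (Finset.mem_filter.1 hu).2 (Finset.mem_filter.1 hu').2
    obtain ⟨cv, hcvT, htop⟩ := exists_top _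
      ⟨val v₀, Finset.mem_image_of_mem val (Finset.mem_filter.2 ⟨Finset.mem_univ _, hv₀⟩)⟩ hTch
    obtain ⟨cv', hcvT', htop'⟩ := exists_top _
      ⟨val v₀', Finset.mem_image_of_mem val (Finset.mem_filter.2 ⟨Finset.mem_univ _, hv₀'⟩)⟩ hTch'
    obtain ⟨c, hcmem, rfl⟩ := Finset.mem_image.1 hcvT
    obtain ⟨c', hcmem', rfl⟩ := Finset.mem_image.1 hcvT'
    have hwc : w c ≠ 0 := (Finset.mem_filter.1 hcmem).2
    have hwc' : w' c' ≠ 0 := (Finset.mem_filter.1 hcmem').2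
    have hwcpos : 0 < w c := lt_of_le_of_ne (h0 c) (Ne.symm hwc)
    have hwcpos' : 0 < w' c' := lt_of_le_of_ne (h0' c') (Ne.symm hwc')
    -- tops are equal
    have hle1 : val c' ≤ val c := by
      intro i
      have h1 : mrg val w i (val c' i) ≠ 0 := by
        rw [hm i]
        exact ne_of_gt (mrg_pos val w' h0' c' hwc' i)
      obtain ⟨v, hv, hvi⟩ := mrg_ne_exists val w i (val c' i) h1
      rw [← hvi]
      exact htop (val v) (Finset.mem_image_of_mem val
        (Finset.mem_filter.2 ⟨Finset.mem_univ _, hv⟩)) i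
    have hle2 : val c ≤ val c' := by
      intro i
      have h1 : mrg val w' i (val c i) ≠ 0 := by
        rw [← hm i]
        exact ne_of_gt (mrg_pos val w h0 c hwc i)
      obtain ⟨v, hv, hvi⟩ := mrg_ne_exists val w' i (val c i) h1
      rw [← hvi]
      exact htop' (val v) (Finset.mem_image_of_mem val
        (Finset.mem_filter.2 ⟨Finset.mem_univ _, hv⟩)) i
    have hcc : c = c' := hval (le_antisymm hle2 hle1)
    subst hcc
    -- peel
    set δ := min (w c) (w' c) with hδ
    have hδpos : 0 < δ := lt_min hwcpos hwcpos'
    set w₁ : V → ℝ := fun v => w v - δ * (if v = c then 1 else 0) with hw₁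
    set w'₁ : V → ℝ := fun v => w' v - δ * (if v = c then 1 else 0) with hw'₁
    have h0₁ : ∀ v, 0 ≤ w₁ v := by
      intro v
      by_cases hvc : v = c
      · subst hvc
        have h1 : δ ≤ w v := by rw [hδ]; exact min_le_left _ _
        have h2 : w₁ v = w v - δ := by rw [hw₁]; simp
        rw [h2]; linarith
      · simp [hw₁, hvc, h0 v]
    have h0'₁ : ∀ v, 0 ≤ w'₁ v := by
      intro v
      by_cases hvc : v = c
      · subst hvc
        have h1 : δ ≤ w' v := by rw [hδ]; exact min_le_right _ _
        have h2 : w'₁ v = w' v - δ := by rw [hw'₁]; simp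
        rw [h2]; linarith
      · simp [hw'₁, hvc, h0' v]
    have hsub : ∀ v, w₁ v ≠ 0 → w v ≠ 0 := by
      intro v hv
      by_cases hvc : v = c
      · subst hvc; exact hwc
      · intro h'; apply hv; simp [hw₁, hvc, h']
    have hsub' : ∀ v, w'₁ v ≠ 0 → w' v ≠ 0 := by
      intro v hv
      by_cases hvc : v = c
      · subst hvc; exact hwc'
      · intro h'; apply hv; simp [hw'₁, hvc, h']
    have hm₁ : ∀ i t, mrg val w₁ i t = mrg val w'₁ i t := by
      intro i t
      have hm' := hm i t
      unfold mrg at hm' ⊢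
      rw [hw₁, hw'₁, WS_peel, WS_peel, hm']
    have hfsub : Finset.univ.filter (fun v => w₁ v ≠ 0)
        ⊆ Finset.univ.filter (fun v => w v ≠ 0) := by
      intro v hv
      exact Finset.mem_filter.2 ⟨Finset.mem_univ v, hsub v (Finset.mem_filter.1 hv).2⟩
    have hfsub' : Finset.univ.filter (fun v => w'₁ v ≠ 0)
        ⊆ Finset.univ.filter (fun v => w' v ≠ 0) := by
      intro v hv
      exact Finset.mem_filter.2 ⟨Finset.mem_univ v, hsub' v (Finset.mem_filter.1 hv).2⟩
    have hcard₁ : (Finset.univ.filter (fun v => w₁ v ≠ 0)).card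
        + (Finset.univ.filter (fun v => w'₁ v ≠ 0)).card ≤ N := by
      rcases le_total (w c) (w' c) with hcase | hcase
      · have hzero : w₁ c = 0 := by simp [hw₁, hδ, min_eq_left hcase]
        have hlt : (Finset.univ.filter (fun v => w₁ v ≠ 0)).card
            < (Finset.univ.filter (fun v => w v ≠ 0)).card := by
          apply Finset.card_lt_card
          rw [Finset.ssubset_iff_of_subset hfsub]
          exact ⟨c, hcmem, by simp [hzero]⟩
        have := Finset.card_le_card hfsub'
        omega
      · have hzero : w'₁ c = 0 := by simp [hw'₁, hδ, min_eq_right hcase]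
        have hlt : (Finset.univ.filter (fun v => w'₁ v ≠ 0)).card
            < (Finset.univ.filter (fun v => w' v ≠ 0)).card := by
          apply Finset.card_lt_card
          rw [Finset.ssubset_iff_of_subset hfsub']
          exact ⟨c, hcmem', by simp [hzero]⟩
        have := Finset.card_le_card hfsub
        omega
    have heq : w₁ = w'₁ := ih w₁ w'₁ h0₁ h0'₁
      (fun v v' hv hv' => hc v v' (hsub v hv) (hsub v' hv'))
      (fun v v' hv hv' => hc' v v' (hsub' v hv) (hsub' v' hv'))
      hm₁ hcard₁
    funext v
    have := congrFun heq v
    by_cases hvc : v = c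
    · subst hvc; simp only [hw₁, hw'₁, if_pos rfl, mul_one] at this; linarith
    · simpa [hw₁, hw'₁, hvc] using this

lemma WS_e (c : V) (h : V → ℝ) : WS (fun v => if v = c then 1 else 0) h = h c := by
  classical
  unfold WS
  have : ∀ v, (if v = c then (1:ℝ) else 0) * h v = if v = c then h v else 0 := by
    intro v; by_cases h' : v = c <;> simp [h']
  simp only [this]
  simp

lemma WS_add (f g h : V → ℝ) : WS (f + g) h = WS f h + WS g h := by
  unfold WS; simp [add_mul, Finset.sum_add_distrib]

lemma WS_sub (f g h : V → ℝ) : WS (f - g) h = WS f h - WS g h := by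
  unfold WS; simp [sub_mul, Finset.sum_sub_distrib]

lemma WS_smul (r : ℝ) (f h : V → ℝ) : WS (r • f) h = r * WS f h := by
  unfold WS; simp [Finset.mul_sum, mul_assoc]

lemma mrg_eq_WS_cind {n : ℕ} (val : V → (Fin n → ℝ)) (w : V → ℝ) (i : Fin n) (t : ℝ) :
    mrg val w i t = WS w (cind val i t) := rfl

/-- total mass is determined by the marginals -/
lemma total_eq_of_mrg {n : ℕ} (hn : 0 < n) (val : V → (Fin n → ℝ)) (w w0 : V → ℝ)
    (hm : ∀ i t, mrg val w i t = mrg val w0 i t) : ∑ v, w v = ∑ v, w0 v := by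
  classical
  set i0 : Fin n := ⟨0, hn⟩
  have key : ∀ u : V → ℝ, ∑ v, u v =
      ∑ t ∈ Finset.univ.image (fun v => val v i0), mrg val u i0 t := by
    intro u
    have h1 : ∀ t, mrg val u i0 t = ∑ v ∈ Finset.univ.filter (fun v => val v i0 = t), u v := by
      intro t
      unfold mrg WS cind
      rw [Finset.sum_filter]
      congr 1; funext v
      by_cases h' : val v i0 = t <;> simp [h']
    simp only [h1]
    exact (Finset.sum_fiberwise_of_maps_to
      (fun v _ => Finset.mem_image_of_mem _ (Finset.mem_univ v)) u).symm
  rw [key w, key w0]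
  exact Finset.sum_congr rfl (fun t _ => hm i0 t)

/-- existence of a chain-supported minimizer with the same marginals -/
theorem exists_chain_min {n : ℕ} (hn : 0 < n) (val : V → (Fin n → ℝ))
    (hval : Function.Injective val)
    (hlat : ∀ a b : V, ∃ c d : V, val c = val a ⊔ val b ∧ val d = val a ⊓ val b)
    (g : (Fin n → ℝ) → ℝ)
    (hg : ∀ a b : V, g (val a ⊔ val b) + g (val a ⊓ val b) ≤ g (val a) + g (val b))
    (w0 : V → ℝ) (h00 : ∀ v, 0 ≤ w0 v) :
    ∃ w : V → ℝ, (∀ v, 0 ≤ w v) ∧ (∀ i t, mrg val w i t = mrg val w0 i t) ∧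
      (∀ v v', w v ≠ 0 → w v' ≠ 0 → val v ≤ val v' ∨ val v' ≤ val v) ∧
      WS w (fun v => g (val v)) ≤ WS w0 (fun v => g (val v)) := by
  classical
  set Gf : V → ℝ := fun v => g (val v) with hGf
  set φf : V → ℝ := fun v => (∑ i, val v i) ^ 2 with hφf
  set B : ℝ := ∑ v, w0 v with hB
  set K : Set (V → ℝ) :=
    {w | (∀ v, 0 ≤ w v) ∧ ∀ i t, mrg val w i t = mrg val w0 i t} with hK
  have hWScont : ∀ h : V → ℝ, Continuous (fun w : V → ℝ => WS w h) := by
    intro h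
    unfold WS
    exact continuous_finset_sum _ (fun v _ => (continuous_apply v).mul continuous_const)
  have hKsub : K ⊆ Set.univ.pi (fun _ : V => Set.Icc (0:ℝ) B) := by
    intro w hw
    rintro v -
    refine ⟨hw.1 v, ?_⟩
    calc w v ≤ ∑ v', w v' := Finset.single_le_sum (fun v' _ => hw.1 v') (Finset.mem_univ v)
    _ = B := total_eq_of_mrg hn val w w0 hw.2
  have hKclosed : IsClosed K := by
    have : K = (⋂ v, {w : V → ℝ | 0 ≤ w v}) ∩
        (⋂ i, ⋂ t, {w : V → ℝ | mrg val w i t = mrg val w0 i t}) := by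
      ext w
      simp only [hK, Set.mem_setOf_eq, Set.mem_inter_iff, Set.mem_iInter]
    rw [this]
    refine IsClosed.inter (isClosed_iInter fun v => ?_)
      (isClosed_iInter fun i => isClosed_iInter fun t => ?_)
    · exact isClosed_le continuous_const (continuous_apply v)
    · exact isClosed_eq (by simpa [mrg_eq_WS_cind] using hWScont (cind val i t))
        continuous_const
  have hKcomp : IsCompact K :=
    IsCompact.of_isClosed_subset (isCompact_univ_pi (fun _ => isCompact_Icc)) hKclosed hKsub
  have hw0K : w0 ∈ K := ⟨h00, fun _ _ => rfl⟩
  obtain ⟨w1, hw1K, hw1min⟩ := hKcomp.exists_isMinOn ⟨w0, hw0K⟩ (hWScont Gf).continuousOn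
  set K' : Set (V → ℝ) := K ∩ {w | WS w Gf = WS w1 Gf} with hK'
  have hK'comp : IsCompact K' :=
    hKcomp.inter_right (isClosed_eq (hWScont Gf) continuous_const)
  obtain ⟨w2, hw2K', hw2max⟩ := hK'comp.exists_isMaxOn ⟨w1, hw1K, rfl⟩ (hWScont φf).continuousOn
  have hw2K : w2 ∈ K := hw2K'.1
  have hw2G : WS w2 Gf = WS w1 Gf := hw2K'.2
  -- the maximizer is chain-supported
  have hchain : ∀ a b : V, w2 a ≠ 0 → w2 b ≠ 0 → val a ≤ val b ∨ val b ≤ val a := by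
    intro a b ha hb
    by_contra habs
    push_neg at habs
    obtain ⟨hab, hba⟩ := habs
    -- coordinates witnessing incomparability
    have hj : ∃ j, val a j < val b j := by
      by_contra h'
      push_neg at h'
      exact hba (fun j => h' j)
    have hi : ∃ i, val b i < val a i := by
      by_contra h'
      push_neg at h'
      exact hab (fun i => h' i)
    obtain ⟨j, hjlt⟩ := hj
    obtain ⟨i, hilt⟩ := hi
    obtain ⟨c, d, hcv, hdv⟩ := hlat a b
    have hane : a ≠ b := by
      intro h; rw [h] at hilt; exact lt_irrefl _ hilt
    have hca : c ≠ a := by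
      intro h; rw [h] at hcv
      have : val b ≤ val a := le_sup_right.trans_eq hcv.symm
      exact hba this
    have hcb : c ≠ b := by
      intro h; rw [h] at hcv
      have : val a ≤ val b := le_sup_left.trans_eq hcv.symm
      exact hab this
    have hda : d ≠ a := by
      intro h; rw [h] at hdv
      exact hab (hdv.le.trans inf_le_right)
    have hdb : d ≠ b := by
      intro h; rw [h] at hdv
      exact hba (hdv.le.trans inf_le_left)
    have hcd : c ≠ d := by
      intro h
      rw [h, hdv] at hcv
      exact hab ((le_sup_left.trans_eq hcv.symm).trans inf_le_right)
    clear hab hba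
    have hapos : 0 < w2 a := lt_of_le_of_ne (hw2K.1 a) (Ne.symm ha)
    have hbpos : 0 < w2 b := lt_of_le_of_ne (hw2K.1 b) (Ne.symm hb)
    set δ : ℝ := min (w2 a) (w2 b) with hδ
    have hδpos : 0 < δ := lt_min hapos hbpos
    set e : V → V → ℝ := fun c₀ v => if v = c₀ then 1 else 0 with he
    set w3 : V → ℝ := w2 + δ • (e c + e d - e a - e b) with hw3
    have hw3v : ∀ v, w3 v = w2 v + δ * (e c v + e d v - e a v - e b v) := by
      intro v; simp [hw3, Pi.add_apply, Pi.smul_apply, Pi.sub_apply, smul_eq_mul]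
    have hWSw3 : ∀ h : V → ℝ, WS w3 h = WS w2 h + δ * (h c + h d - h a - h b) := by
      intro h
      rw [hw3, WS_add, WS_smul, WS_sub, WS_sub, WS_add]
      simp only [he, WS_e]
    -- w3 ∈ K
    have hw3K : w3 ∈ K := by
      constructor
      · intro v
        rw [hw3v v]
        by_cases h1 : v = a
        · subst h1; simp only [he, if_pos rfl, if_neg hca.symm, if_neg hda.symm, if_neg hane]
          have h5 : δ ≤ w2 v := min_le_left (w2 v) (w2 b)
          ring_nf; nlinarith [h5]
        by_cases h2 : v = b
        · subst h2; simp only [he, if_pos rfl, if_neg hcb.symm, if_neg hdb.symm, if_neg h1]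
          have h5 : δ ≤ w2 v := min_le_right (w2 a) (w2 v)
          ring_nf; nlinarith [h5]
        by_cases h3 : v = c
        · subst h3; simp only [he, if_pos rfl, if_neg hca, if_neg hcb, if_neg hcd]
          nlinarith [hw2K.1 v, hδpos]
        by_cases h4 : v = d
        · subst h4; simp only [he, if_pos rfl, if_neg hda, if_neg hdb, if_neg (Ne.symm hcd)]
          nlinarith [hw2K.1 v, hδpos]
        · simp only [he, if_neg h1, if_neg h2, if_neg h3, if_neg h4]
          simpa using hw2K.1 v
      · intro i' t
        rw [mrg_eq_WS_cind, hWSw3 (cind val i' t), mrg_eq_WS_cind] at *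
        have hzero : cind val i' t c + cind val i' t d - cind val i' t a - cind val i' t b = 0 := by
          unfold cind
          rw [hcv, hdv, Pi.sup_apply, Pi.inf_apply]
          rcases le_total (val a i') (val b i') with h' | h'
          · rw [sup_eq_right.2 h', inf_eq_left.2 h']; ring
          · rw [sup_eq_left.2 h', inf_eq_right.2 h']; ring
        rw [hzero, mul_zero, add_zero]
        exact hw2K.2 i' t
    -- value of g does not increase
    have hGle : WS w3 Gf ≤ WS w2 Gf := by
      rw [hWSw3 Gf]
      have : Gf c + Gf d - Gf a - Gf b ≤ 0 := by
        have := hg a b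
        simp only [hGf]
        rw [hcv, hdv]
        linarith
      nlinarith [hδpos.le]
    have hGeq : WS w3 Gf = WS w1 Gf := by
      have h1 : WS w1 Gf ≤ WS w3 Gf := hw1min hw3K
      have h2 : WS w3 Gf ≤ WS w1 Gf := hGle.trans_eq hw2G
      linarith
    have hw3K' : w3 ∈ K' := ⟨hw3K, hGeq⟩
    -- φ strictly increases: contradiction
    have hφgt : WS w2 φf < WS w3 φf := by
      rw [hWSw3 φf]
      have hgap : 0 < φf c + φf d - φf a - φf b := by
        simp only [hφf]
        set M : ℝ := ∑ i', val c i' with hM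
        set m : ℝ := ∑ i', val d i' with hm
        set s1 : ℝ := ∑ i', val a i' with hs1
        set s2 : ℝ := ∑ i', val b i' with hs2
        have hsum : M + m = s1 + s2 := by
          rw [hM, hm, hs1, hs2, ← Finset.sum_add_distrib, ← Finset.sum_add_distrib]
          apply Finset.sum_congr rfl
          intro i' _
          rw [hcv, hdv, Pi.sup_apply, Pi.inf_apply]
          exact max_add_min _ _
        have hM1 : s1 < M := by
          rw [hs1, hM]
          apply Finset.sum_lt_sum
          · intro i' _
            rw [hcv, Pi.sup_apply]; exact le_sup_left
          · exact ⟨j, Finset.mem_univ j, by rw [hcv, Pi.sup_apply]; exact lt_sup_iff.2 (Or.inr hjlt)⟩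
        have hM2 : s2 < M := by
          rw [hs2, hM]
          apply Finset.sum_lt_sum
          · intro i' _
            rw [hcv, Pi.sup_apply]; exact le_sup_right
          · exact ⟨i, Finset.mem_univ i, by rw [hcv, Pi.sup_apply]; exact lt_sup_iff.2 (Or.inl hilt)⟩
        have he0 : M + m - s1 - s2 = 0 := by linarith
        have hkey : M ^ 2 + m ^ 2 - s1 ^ 2 - s2 ^ 2
            = 2 * ((M - s1) * (M - s2)) + (M + m - s1 - s2) * (m + s1 + s2 - M) := by ring
        rw [hkey, he0, zero_mul, add_zero]
        have := mul_pos (sub_pos.2 hM1) (sub_pos.2 hM2)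
        linarith
      nlinarith [hδpos]
    exact absurd (hw2max hw3K') (not_le.2 hφgt)
  exact ⟨w2, hw2K.1, hw2K.2, hchain, by
    calc WS w2 Gf = WS w1 Gf := hw2G
    _ ≤ WS w0 Gf := hw1min hw0K⟩

/-- The comonotone (chain-supported) coupling minimizes the expectation of a submodular
function among couplings with the same marginals (finite support version). -/
theorem finite_comparison {n : ℕ} (hn : 0 < n) (val : V → (Fin n → ℝ))
    (hval : Function.Injective val)
    (hlat : ∀ a b : V, ∃ c d : V, val c = val a ⊔ val b ∧ val d = val a ⊓ val b)
    (g : (Fin n → ℝ) → ℝ)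
    (hg : ∀ a b : V, g (val a ⊔ val b) + g (val a ⊓ val b) ≤ g (val a) + g (val b))
    (wX wZ : V → ℝ) (hX0 : ∀ v, 0 ≤ wX v) (hZ0 : ∀ v, 0 ≤ wZ v)
    (hchain : ∀ v v', wZ v ≠ 0 → wZ v' ≠ 0 → val v ≤ val v' ∨ val v' ≤ val v)
    (hmarg : ∀ i t, mrg val wZ i t = mrg val wX i t) :
    WS wZ (fun v => g (val v)) ≤ WS wX (fun v => g (val v)) := by
  classical
  obtain ⟨w, hw0, hwm, hwch, hwle⟩ := exists_chain_min hn val hval hlat g hg wX hX0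
  have hZW : wZ = w := by
    apply chain_unique hn val hval
      ((Finset.univ.filter (fun v => wZ v ≠ 0)).card
        + (Finset.univ.filter (fun v => w v ≠ 0)).card)
      wZ w hZ0 hw0 hchain hwch
      (fun i t => (hmarg i t).trans (hwm i t).symm) le_rfl
  rw [hZW]
  exact hwle




section EN

variable {n : ℕ}

/-- 1-Lipschitz property of `min c ·`. -/
lemma abs_min_sub_min (c a b : ℝ) : |min c a - min c b| ≤ |a - b| := by
  rw [abs_le]
  constructor <;> rcases le_total c a with h1 | h1 <;> rcases le_total c b with h2 | h2 <;>
    simp [min_eq_left, min_eq_right, h1, h2] <;>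
    rcases abs_cases (a - b) with ⟨h3, h4⟩ | ⟨h3, h4⟩ <;> linarith

/-- submodularity-type inequality for truncation. -/
lemma min_quad (c a b s t : ℝ) (hsa : a ≤ s) (hsb : b ≤ s) (hst : s + t ≤ a + b) :
    min c s + min c t ≤ min c a + min c b := by
  simp only [min_def]
  split_ifs <;> linarith

variable (π : Fin n → Fin n → ℝ) (pb : Fin n → ℝ)

/-- iterates of the clearing map, started at `p̄` -/
def iter : ℕ → (Fin n → ℝ) → Fin n → ℝ
  | 0, _, i => pb i
  | (k+1), x, i => min (pb i) (x i + ∑ j, π j i * iter k x j)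

lemma iter_continuous (k : ℕ) (i : Fin n) : Continuous fun x => iter π pb k x i := by
  induction k generalizing i with
  | zero => exact continuous_const
  | succ k ih =>
    show Continuous fun x => min (pb i) (x i + ∑ j, π j i * iter π pb k x j)
    exact continuous_const.min ((continuous_apply i).add
      (continuous_finset_sum _ fun j _ => continuous_const.mul (ih j)))

lemma iter_mono (hπ0 : ∀ j i, 0 ≤ π j i) (k : ℕ) (x y : Fin n → ℝ) (hxy : ∀ i, x i ≤ y i) :
    ∀ i, iter π pb k x i ≤ iter π pb k y i := by
  induction k with
  | zero => intro i; exact le_rfl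
  | succ k ih =>
    intro i
    show min _ _ ≤ min _ _
    refine min_le_min le_rfl (add_le_add (hxy i) (Finset.sum_le_sum fun j _ => ?_))
    exact mul_le_mul_of_nonneg_left (ih j) (hπ0 j i)

lemma iter_submod (hπ0 : ∀ j i, 0 ≤ π j i) (k : ℕ) (x y : Fin n → ℝ) :
    ∀ i, iter π pb k (x ⊔ y) i + iter π pb k (x ⊓ y) i
      ≤ iter π pb k x i + iter π pb k y i := by
  induction k with
  | zero => intro i; exact le_rfl
  | succ k ih =>
    intro i
    show min _ _ + min _ _ ≤ min _ _ + min _ _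
    apply min_quad
    · refine add_le_add ?_ (Finset.sum_le_sum fun j _ => ?_)
      · exact le_sup_left
      · exact mul_le_mul_of_nonneg_left
          (iter_mono π pb hπ0 k x (x ⊔ y) (fun i' => le_sup_left) j) (hπ0 j i)
    · refine add_le_add ?_ (Finset.sum_le_sum fun j _ => ?_)
      · exact le_sup_right
      · exact mul_le_mul_of_nonneg_left
          (iter_mono π pb hπ0 k y (x ⊔ y) (fun i' => le_sup_right) j) (hπ0 j i)
    · have h1 : (x ⊔ y) i + (x ⊓ y) i = x i + y i := by
        simp only [Pi.sup_apply, Pi.inf_apply]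
        exact max_add_min _ _
      have h2 : ∑ j, π j i * iter π pb k (x ⊔ y) j + ∑ j, π j i * iter π pb k (x ⊓ y) j
          ≤ ∑ j, π j i * iter π pb k x j + ∑ j, π j i * iter π pb k y j := by
        rw [← Finset.sum_add_distrib, ← Finset.sum_add_distrib]
        refine Finset.sum_le_sum fun j _ => ?_
        rw [← mul_add, ← mul_add]
        exact mul_le_mul_of_nonneg_left (ih j) (hπ0 j i)
      linarith
/-- maximal in-network row sum -/
noncomputable def kap (hn : 0 < n) : ℝ :=
  Finset.univ.sup' ⟨⟨0, hn⟩, Finset.mem_univ _⟩ (fun j => ∑ i, π j i)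

lemma kap_lt_one (hn : 0 < n) (hrs : ∀ j, ∑ i, π j i < 1) : kap π hn < 1 :=
  (Finset.sup'_lt_iff _).2 fun j _ => hrs j

lemma le_kap (hn : 0 < n) (j : Fin n) : ∑ i, π j i ≤ kap π hn := by
  unfold kap
  exact Finset.le_sup' (fun j => ∑ i, π j i) (Finset.mem_univ j)

lemma kap_nonneg (hn : 0 < n) (hπ0 : ∀ j i, 0 ≤ π j i) : 0 ≤ kap π hn :=
  le_trans (Finset.sum_nonneg fun i _ => hπ0 ⟨0, hn⟩ i) (le_kap π hn ⟨0, hn⟩)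

/-- summation engine: if `u i ≤ ε i + (Πᵀu) i` then `∑ (1 - rowsum j) u j ≤ ∑ ε`. -/
lemma weighted_engine (hπ0 : ∀ j i, 0 ≤ π j i) (u ε : Fin n → ℝ) (hu : ∀ i, 0 ≤ u i)
    (h : ∀ i, u i ≤ ε i + ∑ j, π j i * u j) :
    ∑ j, (1 - ∑ i, π j i) * u j ≤ ∑ i, ε i := by
  have hsum : ∑ i, u i ≤ ∑ i, ε i + ∑ j, (∑ i, π j i) * u j := by
    calc ∑ i, u i ≤ ∑ i, (ε i + ∑ j, π j i * u j) := Finset.sum_le_sum fun i _ => h i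
    _ = ∑ i, ε i + ∑ i, ∑ j, π j i * u j := Finset.sum_add_distrib
    _ = ∑ i, ε i + ∑ j, (∑ i, π j i) * u j := by
        rw [Finset.sum_comm]
        congr 1
        exact Finset.sum_congr rfl fun j _ => by rw [Finset.sum_mul]
  have hexp : ∑ j, (1 - ∑ i, π j i) * u j = ∑ j, u j - ∑ j, (∑ i, π j i) * u j := by
    rw [← Finset.sum_sub_distrib]
    exact Finset.sum_congr rfl fun j _ => by ring
  linarith


section Pfix

variable (P : (Fin n → ℝ) → (Fin n → ℝ))
variable (hPb : ∀ x : Fin n → ℝ, (∀ i, 0 ≤ x i) → ∀ i, 0 ≤ P x i ∧ P x i ≤ pb i)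
variable (hPe : ∀ x : Fin n → ℝ, (∀ i, 0 ≤ x i) →
  ∀ i, P x i = min (pb i) (x i + ∑ j, π j i * P x j))

include hPb hPe

omit hPb in
/-- pointwise identity for the equity -/
lemma max_identity (x : Fin n → ℝ) (hx : ∀ i, 0 ≤ x i) (i : Fin n) :
    max (x i + (∑ j, π j i * P x j) - pb i) 0
      = x i + (∑ j, π j i * P x j) - P x i := by
  have he := hPe x hx i
  rcases le_total (pb i) (x i + ∑ j, π j i * P x j) with h | h
  · rw [min_eq_left h] at he
    rw [he, max_eq_left (by linarith)]
  · rw [min_eq_right h] at he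
    rw [he, max_eq_right (by linarith)]
    ring

omit hPb in
/-- total-equity identity -/
lemma sum_max_identity (x : Fin n → ℝ) (hx : ∀ i, 0 ≤ x i) :
    ∑ i, max (x i + (∑ j, π j i * P x j) - pb i) 0
      = ∑ i, x i - ∑ j, (1 - ∑ i, π j i) * P x j := by
  rw [Finset.sum_congr rfl fun i _ => max_identity π pb P hPe x hx i]
  have h1 : ∑ i, (x i + (∑ j, π j i * P x j) - P x i)
      = ∑ i, x i + ∑ i, ∑ j, π j i * P x j - ∑ i, P x i := by
    rw [← Finset.sum_add_distrib, ← Finset.sum_sub_distrib]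
  have h2 : ∑ i, ∑ j, π j i * P x j = ∑ j, (∑ i, π j i) * P x j := by
    rw [Finset.sum_comm]
    exact Finset.sum_congr rfl fun j _ => by rw [Finset.sum_mul]
  have h3 : ∑ j, (1 - ∑ i, π j i) * P x j = ∑ j, P x j - ∑ j, (∑ i, π j i) * P x j := by
    rw [← Finset.sum_sub_distrib]
    exact Finset.sum_congr rfl fun j _ => by ring
  rw [h1, h2, h3]
  ring

omit hPe in
/-- aggregate payments to society -/
noncomputable def gfun (x : Fin n → ℝ) : ℝ := ∑ j, (1 - ∑ i, π j i) * P x j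

omit hPe in
lemma gfun_nonneg (hrs : ∀ j, ∑ i, π j i < 1) (x : Fin n → ℝ) (hx : ∀ i, 0 ≤ x i) :
    0 ≤ gfun π P x :=
  Finset.sum_nonneg fun j _ => mul_nonneg (by linarith [hrs j]) (hPb x hx j).1

omit hPe in
lemma gfun_le (hπ0 : ∀ j i, 0 ≤ π j i) (hrs : ∀ j, ∑ i, π j i < 1) (x : Fin n → ℝ)
    (hx : ∀ i, 0 ≤ x i) : gfun π P x ≤ ∑ j, pb j := by
  refine Finset.sum_le_sum fun j _ => ?_
  have h1 := (hPb x hx j).1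
  have h2 := (hPb x hx j).2
  have h3 : 0 ≤ ∑ i, π j i := Finset.sum_nonneg fun i _ => hπ0 j i
  nlinarith

/-- `gfun` is 1-Lipschitz for the ℓ¹ norm on the nonnegative orthant -/
lemma gfun_lip (hπ0 : ∀ j i, 0 ≤ π j i) (hrs : ∀ j, ∑ i, π j i < 1)
    (x y : Fin n → ℝ) (hx : ∀ i, 0 ≤ x i) (hy : ∀ i, 0 ≤ y i) :
    |gfun π P x - gfun π P y| ≤ ∑ i, |x i - y i| := by
  set u : Fin n → ℝ := fun i => |P x i - P y i| with hu
  have hkey : ∀ i, u i ≤ |x i - y i| + ∑ j, π j i * u j := by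
    intro i
    rw [hu]
    simp only
    rw [hPe x hx i, hPe y hy i]
    calc |min (pb i) (x i + ∑ j, π j i * P x j) - min (pb i) (y i + ∑ j, π j i * P y j)|
        ≤ |(x i + ∑ j, π j i * P x j) - (y i + ∑ j, π j i * P y j)| :=
          abs_min_sub_min _ _ _
      _ = |(x i - y i) + (∑ j, π j i * P x j - ∑ j, π j i * P y j)| := by ring_nf
      _ ≤ |x i - y i| + |∑ j, π j i * P x j - ∑ j, π j i * P y j| := abs_add_le _ _
      _ ≤ |x i - y i| + ∑ j, π j i * |P x j - P y j| := by
          refine add_le_add le_rfl ?_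
          rw [← Finset.sum_sub_distrib]
          calc |∑ j, (π j i * P x j - π j i * P y j)| ≤ ∑ j, |π j i * P x j - π j i * P y j| :=
                Finset.abs_sum_le_sum_abs _ _
            _ = ∑ j, π j i * |P x j - P y j| := by
                refine Finset.sum_congr rfl fun j _ => ?_
                rw [← mul_sub, abs_mul, abs_of_nonneg (hπ0 j i)]
  have heng := weighted_engine π hπ0 u (fun i => |x i - y i|) (fun i => abs_nonneg _) hkey
  have hg : |gfun π P x - gfun π P y| ≤ ∑ j, (1 - ∑ i, π j i) * u j := by
    unfold gfun
    rw [← Finset.sum_sub_distrib]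
    calc |∑ j, ((1 - ∑ i, π j i) * P x j - (1 - ∑ i, π j i) * P y j)|
        ≤ ∑ j, |(1 - ∑ i, π j i) * P x j - (1 - ∑ i, π j i) * P y j| :=
          Finset.abs_sum_le_sum_abs _ _
      _ = ∑ j, (1 - ∑ i, π j i) * u j := by
          refine Finset.sum_congr rfl fun j _ => ?_
          rw [← mul_sub, abs_mul, abs_of_nonneg (by linarith [hrs j])]
  linarith

/-- geometric convergence of the iterates to the clearing vector -/
lemma iter_rate (hn : 0 < n) (hπ0 : ∀ j i, 0 ≤ π j i) (hpb : ∀ i, 0 < pb i)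
    (x : Fin n → ℝ) (hx : ∀ i, 0 ≤ x i) (k : ℕ) :
    ∑ i, |iter π pb k x i - P x i| ≤ (kap π hn) ^ k * ∑ i, pb i := by
  induction k with
  | zero =>
    rw [pow_zero, one_mul]
    refine Finset.sum_le_sum fun i _ => ?_
    show |pb i - P x i| ≤ pb i
    have h1 := (hPb x hx i).1
    have h2 := (hPb x hx i).2
    rw [abs_of_nonneg (by linarith)]
    linarith
  | succ k ih =>
    have hkey : ∀ i, |iter π pb (k+1) x i - P x i| ≤ ∑ j, π j i * |iter π pb k x j - P x j| := by
      intro i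
      show |min (pb i) (x i + ∑ j, π j i * iter π pb k x j) - P x i| ≤ _
      rw [hPe x hx i]
      calc |min (pb i) (x i + ∑ j, π j i * iter π pb k x j)
            - min (pb i) (x i + ∑ j, π j i * P x j)|
          ≤ |(x i + ∑ j, π j i * iter π pb k x j) - (x i + ∑ j, π j i * P x j)| :=
            abs_min_sub_min _ _ _
        _ = |∑ j, (π j i * iter π pb k x j - π j i * P x j)| := by
            rw [Finset.sum_sub_distrib]; ring_nf
        _ ≤ ∑ j, |π j i * iter π pb k x j - π j i * P x j| := Finset.abs_sum_le_sum_abs _ _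
        _ = ∑ j, π j i * |iter π pb k x j - P x j| := by
            refine Finset.sum_congr rfl fun j _ => ?_
            rw [← mul_sub, abs_mul, abs_of_nonneg (hπ0 j i)]
    calc ∑ i, |iter π pb (k+1) x i - P x i|
        ≤ ∑ i, ∑ j, π j i * |iter π pb k x j - P x j| :=
          Finset.sum_le_sum fun i _ => hkey i
      _ = ∑ j, (∑ i, π j i) * |iter π pb k x j - P x j| := by
          rw [Finset.sum_comm]
          exact Finset.sum_congr rfl fun j _ => by rw [Finset.sum_mul]
      _ ≤ ∑ j, kap π hn * |iter π pb k x j - P x j| :=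
          Finset.sum_le_sum fun j _ =>
            mul_le_mul_of_nonneg_right (le_kap π hn j) (abs_nonneg _)
      _ = kap π hn * ∑ j, |iter π pb k x j - P x j| := by rw [Finset.mul_sum]
      _ ≤ kap π hn * ((kap π hn) ^ k * ∑ i, pb i) :=
          mul_le_mul_of_nonneg_left ih (kap_nonneg π hn hπ0)
      _ = (kap π hn) ^ (k+1) * ∑ i, pb i := by ring

/-- `gfun` is submodular on the nonnegative orthant -/
lemma gfun_submod (hn : 0 < n) (hπ0 : ∀ j i, 0 ≤ π j i) (hrs : ∀ j, ∑ i, π j i < 1)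
    (hpb : ∀ i, 0 < pb i) (x y : Fin n → ℝ) (hx : ∀ i, 0 ≤ x i) (hy : ∀ i, 0 ≤ y i) :
    gfun π P (x ⊔ y) + gfun π P (x ⊓ y) ≤ gfun π P x + gfun π P y := by
  have hxy1 : ∀ i, 0 ≤ (x ⊔ y) i := fun i => le_trans (hx i) le_sup_left
  have hxy2 : ∀ i, 0 ≤ (x ⊓ y) i := fun i => le_inf (hx i) (hy i)
  -- approximate by the iterates
  set C : ℝ := ∑ i, pb i with hC
  have hgk : ∀ (k : ℕ) (z : Fin n → ℝ), (∀ i, 0 ≤ z i) →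
      |∑ j, (1 - ∑ i, π j i) * iter π pb k z j - gfun π P z|
        ≤ (kap π hn) ^ k * C := by
    intro k z hz
    unfold gfun
    rw [← Finset.sum_sub_distrib]
    calc |∑ j, ((1 - ∑ i, π j i) * iter π pb k z j - (1 - ∑ i, π j i) * P z j)|
        ≤ ∑ j, |(1 - ∑ i, π j i) * iter π pb k z j - (1 - ∑ i, π j i) * P z j| :=
          Finset.abs_sum_le_sum_abs _ _
      _ ≤ ∑ j, |iter π pb k z j - P z j| := by
          refine Finset.sum_le_sum fun j _ => ?_
          rw [← mul_sub, abs_mul]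
          have h1 : |1 - ∑ i, π j i| ≤ 1 := by
            rw [abs_of_nonneg (by linarith [hrs j])]
            have : 0 ≤ ∑ i, π j i := Finset.sum_nonneg fun i _ => hπ0 j i
            linarith
          nlinarith [abs_nonneg (iter π pb k z j - P z j)]
      _ ≤ (kap π hn) ^ k * C := iter_rate π pb P hPb hPe hn hπ0 hpb z hz k
  have hsubk : ∀ k : ℕ, ∑ j, (1 - ∑ i, π j i) * iter π pb k (x ⊔ y) j
      + ∑ j, (1 - ∑ i, π j i) * iter π pb k (x ⊓ y) j
      ≤ ∑ j, (1 - ∑ i, π j i) * iter π pb k x j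
      + ∑ j, (1 - ∑ i, π j i) * iter π pb k y j := by
    intro k
    rw [← Finset.sum_add_distrib, ← Finset.sum_add_distrib]
    refine Finset.sum_le_sum fun j _ => ?_
    rw [← mul_add, ← mul_add]
    exact mul_le_mul_of_nonneg_left (iter_submod π pb hπ0 k x y j) (by linarith [hrs j])
  -- pass to the limit
  have hlim : Filter.Tendsto (fun k : ℕ => (kap π hn) ^ k * C) Filter.atTop (nhds 0) := by
    rw [show (0:ℝ) = 0 * C by ring]
    exact Filter.Tendsto.mul_const C
      (tendsto_pow_atTop_nhds_zero_of_lt_one (kap_nonneg π hn hπ0) (kap_lt_one π hn hrs))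
  have hineq : ∀ k : ℕ, gfun π P (x ⊔ y) + gfun π P (x ⊓ y)
      ≤ gfun π P x + gfun π P y + 4 * ((kap π hn) ^ k * C) := by
    intro k
    have h1 := hgk k (x ⊔ y) hxy1
    have h2 := hgk k (x ⊓ y) hxy2
    have h3 := hgk k x hx
    have h4 := hgk k y hy
    have h5 := hsubk k
    rw [abs_le] at h1 h2 h3 h4
    obtain ⟨h1a, h1b⟩ := h1
    obtain ⟨h2a, h2b⟩ := h2
    obtain ⟨h3a, h3b⟩ := h3
    obtain ⟨h4a, h4b⟩ := h4
    linarith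
  have hlim2 : Filter.Tendsto
      (fun k : ℕ => gfun π P x + gfun π P y + 4 * ((kap π hn) ^ k * C))
      Filter.atTop (nhds (gfun π P x + gfun π P y)) := by
    have h4 : Filter.Tendsto (fun k : ℕ => 4 * ((kap π hn) ^ k * C))
        Filter.atTop (nhds (4 * 0)) := Filter.Tendsto.const_mul (4:ℝ) hlim
    have h5 := Filter.Tendsto.add
      (tendsto_const_nhds : Filter.Tendsto (fun _ : ℕ => gfun π P x + gfun π P y)
        Filter.atTop (nhds (gfun π P x + gfun π P y))) h4
    simpa using h5
  exact ge_of_tendsto hlim2 (Filter.Eventually.of_forall hineq)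

end Pfix

end EN




section Quantile

variable (ν : Measure ℝ) [IsProbabilityMeasure ν]

/-- cdf of a law on ℝ -/
noncomputable def cdf' (t : ℝ) : ℝ := (ν (Set.Iic t)).toReal

/-- lower quantile function restricted to nonnegative support -/
noncomputable def qtl (u : ℝ) : ℝ := sInf {t | 0 ≤ t ∧ u ≤ cdf' ν t}

lemma cdf'_mono : Monotone (cdf' ν) := fun a b hab =>
  ENNReal.toReal_mono (measure_ne_top ν _) (measure_mono (Set.Iic_subset_Iic.2 hab))

lemma cdf'_le_one (t : ℝ) : cdf' ν t ≤ 1 := by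
  unfold cdf'
  rw [show (1:ℝ) = (ν Set.univ).toReal by simp [measure_univ]]
  exact ENNReal.toReal_mono (measure_ne_top ν _) (measure_mono (Set.subset_univ _))

lemma cdf'_rc (a u : ℝ) (h : ∀ m : ℕ, u ≤ cdf' ν (a + ((m:ℝ)+1)⁻¹)) : u ≤ cdf' ν a := by
  have hanti : Antitone (fun m : ℕ => Set.Iic (a + ((m:ℝ)+1)⁻¹)) := by
    intro m m' hmm'
    apply Set.Iic_subset_Iic.2
    have : ((m':ℝ)+1)⁻¹ ≤ ((m:ℝ)+1)⁻¹ := by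
      apply inv_anti₀ (by positivity)
      exact_mod_cast add_le_add_left (Nat.cast_le.2 hmm') 1
    linarith
  have hiInter : ⋂ m : ℕ, Set.Iic (a + ((m:ℝ)+1)⁻¹) = Set.Iic a := by
    ext x
    simp only [Set.mem_iInter, Set.mem_Iic]
    constructor
    · intro hx
      by_contra hxa
      push_neg at hxa
      obtain ⟨m, hm⟩ := exists_nat_one_div_lt (show 0 < x - a by linarith)
      have := hx m
      rw [one_div] at hm
      linarith
    · intro hx m
      have : (0:ℝ) < ((m:ℝ)+1)⁻¹ := by positivity
      linarith
  have htend : Tendsto (fun m : ℕ => ν (Set.Iic (a + ((m:ℝ)+1)⁻¹))) atTop (nhds (ν (Set.Iic a))) := by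
    have := MeasureTheory.tendsto_measure_iInter_atTop
      (fun m => (measurableSet_Iic).nullMeasurableSet) hanti ⟨0, measure_ne_top ν _⟩
    rwa [hiInter] at this
  have htend2 : Tendsto (fun m : ℕ => cdf' ν (a + ((m:ℝ)+1)⁻¹)) atTop (nhds (cdf' ν a)) :=
    (ENNReal.tendsto_toReal (measure_ne_top ν _)).comp htend
  exact ge_of_tendsto htend2 (Eventually.of_forall h)

lemma cdf'_neg (hsupp : ν (Set.Iio 0) = 0) (a : ℝ) (ha : a < 0) : cdf' ν a = 0 := by
  unfold cdf'
  have : ν (Set.Iic a) = 0 :=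
    measure_mono_null (Set.Iic_subset_Iio.2 ha) hsupp
  simp [this]

lemma exists_cdf'_ge (u : ℝ) (hu : u < 1) : ∃ t : ℝ, 0 ≤ t ∧ u ≤ cdf' ν t := by
  have hmono : Monotone fun m : ℕ => Set.Iic ((m:ℝ)) := fun m m' h =>
    Set.Iic_subset_Iic.2 (Nat.cast_le.2 h)
  have huni : ⋃ m : ℕ, Set.Iic ((m:ℝ)) = Set.univ := by
    ext x
    simp only [Set.mem_iUnion, Set.mem_Iic, Set.mem_univ, iff_true]
    obtain ⟨m, hm⟩ := exists_nat_ge x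
    exact ⟨m, hm⟩
  have htend : Tendsto (fun m : ℕ => ν (Set.Iic ((m:ℝ)))) atTop (nhds 1) := by
    have h0 : Tendsto (⇑ν ∘ (fun m : ℕ => Set.Iic ((m:ℝ)))) atTop
        (nhds (ν (⋃ m : ℕ, Set.Iic ((m:ℝ))))) :=
      MeasureTheory.tendsto_measure_iUnion_atTop hmono
    rw [huni, measure_univ] at h0
    exact h0
  have htend2 : Tendsto (fun m : ℕ => cdf' ν ((m:ℝ))) atTop (nhds 1) := by
    have h1 := (ENNReal.tendsto_toReal (by norm_num : (1:ℝ≥0∞) ≠ ⊤)).comp htend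
    simpa [cdf', Function.comp_def] using h1
  have : ∀ᶠ m : ℕ in atTop, u < cdf' ν ((m:ℝ)) :=
    htend2.eventually (eventually_gt_nhds hu)
  obtain ⟨m, hm⟩ := this.exists
  exact ⟨m, Nat.cast_nonneg m, hm.le⟩

lemma qtl_nonneg (u : ℝ) : 0 ≤ qtl ν u :=
  Real.sInf_nonneg (fun t ht => ht.1)

lemma qtl_le_iff (hsupp : ν (Set.Iio 0) = 0) (u : ℝ) (hu0 : 0 < u) (hu1 : u < 1) (a : ℝ) :
    qtl ν u ≤ a ↔ u ≤ cdf' ν a := by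
  have hne : {t | 0 ≤ t ∧ u ≤ cdf' ν t}.Nonempty := exists_cdf'_ge ν u hu1
  have hbdd : BddBelow {t | 0 ≤ t ∧ u ≤ cdf' ν t} := ⟨0, fun t ht => ht.1⟩
  constructor
  · intro hq
    apply cdf'_rc ν a u
    intro m
    have hpos : (0:ℝ) < ((m:ℝ)+1)⁻¹ := by positivity
    obtain ⟨t, ht, htlt⟩ := Real.lt_sInf_add_pos hne hpos
    have h1 : u ≤ cdf' ν t := ht.2
    refine h1.trans (cdf'_mono ν ?_)
    have : sInf {t | 0 ≤ t ∧ u ≤ cdf' ν t} = qtl ν u := rfl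
    rw [this] at htlt
    linarith
  · intro hF
    have ha0 : 0 ≤ a := by
      by_contra ha
      push_neg at ha
      rw [cdf'_neg ν hsupp a ha] at hF
      linarith
    exact csInf_le hbdd ⟨ha0, hF⟩

lemma qtl_measurable : Measurable (qtl ν) := by
  apply measurable_of_Iio
  intro c
  rcases le_or_gt c 0 with hc | hc
  · have : qtl ν ⁻¹' Set.Iio c = ∅ := by
      ext u
      simp only [Set.mem_preimage, Set.mem_Iio, Set.mem_empty_iff_false, iff_false, not_lt]
      exact hc.trans (qtl_nonneg ν u)
    rw [this]; exact MeasurableSet.empty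
  · have hA : IsLowerSet {u : ℝ | {t | 0 ≤ t ∧ u ≤ cdf' ν t}.Nonempty ∧ qtl ν u < c} := by
      intro u u' hu'u hu
      have hsub : {t | 0 ≤ t ∧ u ≤ cdf' ν t} ⊆ {t | 0 ≤ t ∧ u' ≤ cdf' ν t} :=
        fun t ht => ⟨ht.1, hu'u.trans ht.2⟩
      have hne' : {t | 0 ≤ t ∧ u' ≤ cdf' ν t}.Nonempty := hu.1.mono hsub
      refine ⟨hne', lt_of_le_of_lt ?_ hu.2⟩
      exact csInf_le_csInf ⟨0, fun t ht => ht.1⟩ hu.1 hsub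
    have hB : IsUpperSet {u : ℝ | ¬ {t | 0 ≤ t ∧ u ≤ cdf' ν t}.Nonempty} := by
      intro u u' huu' hu
      intro hne'
      exact hu (hne'.mono fun t ht => ⟨ht.1, ht.2.trans' (by linarith)⟩)
    have heq : qtl ν ⁻¹' Set.Iio c
        = {u : ℝ | {t | 0 ≤ t ∧ u ≤ cdf' ν t}.Nonempty ∧ qtl ν u < c}
          ∪ {u : ℝ | ¬ {t | 0 ≤ t ∧ u ≤ cdf' ν t}.Nonempty} := by
      ext u
      simp only [Set.mem_preimage, Set.mem_Iio, Set.mem_union, Set.mem_setOf_eq]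
      by_cases hne : {t | 0 ≤ t ∧ u ≤ cdf' ν t}.Nonempty
      · simp [hne]
      · simp only [hne, not_false_iff, or_true, iff_true]
        have : qtl ν u = 0 := by
          unfold qtl
          rw [Set.not_nonempty_iff_eq_empty.1 hne]
          exact Real.sInf_empty
        rw [this]; exact hc
    rw [heq]
    exact (hA.ordConnected.measurableSet).union (hB.ordConnected.measurableSet)

/-- the quantile transform of a uniform variable has law `ν` -/
lemma map_qtl_eq {Ω : Type} [MeasurableSpace Ω] (ℙ : Measure Ω) [IsProbabilityMeasure ℙ]
    (U : Ω → ℝ) (hUm : Measurable U)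
    (hU : ℙ.map U = volume.restrict (Set.Icc (0:ℝ) 1))
    (hsupp : ν (Set.Iio 0) = 0) :
    Measure.map (fun ω => qtl ν (U ω)) ℙ = ν := by
  have hmeasq : Measurable fun ω => qtl ν (U ω) := (qtl_measurable ν).comp hUm
  haveI : IsProbabilityMeasure (Measure.map (fun ω => qtl ν (U ω)) ℙ) :=
    Measure.isProbabilityMeasure_map hmeasq.aemeasurable
  apply Measure.ext_of_Iic
  intro a
  rw [Measure.map_apply hmeasq measurableSet_Iic]
  -- the good event
  set E : Set Ω := U ⁻¹' (Set.Ioo (0:ℝ) 1) with hE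
  have hEc : ℙ Eᶜ = 0 := by
    have h1 : ℙ (U ⁻¹' (Set.Ioo (0:ℝ) 1)ᶜ) = (ℙ.map U) (Set.Ioo (0:ℝ) 1)ᶜ :=
      (Measure.map_apply hUm measurableSet_Ioo.compl).symm
    have h2 : (volume.restrict (Set.Icc (0:ℝ) 1)) (Set.Ioo (0:ℝ) 1)ᶜ = 0 := by
      rw [Measure.restrict_apply measurableSet_Ioo.compl]
      have hss : (Set.Ioo (0:ℝ) 1)ᶜ ∩ Set.Icc (0:ℝ) 1 ⊆ {0, 1} := by
        intro x hx
        obtain ⟨hx1, hx2⟩ := hx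
        simp only [Set.mem_compl_iff, Set.mem_Ioo, not_and_or, not_lt] at hx1
        rw [Set.mem_Icc] at hx2
        simp only [Set.mem_insert_iff, Set.mem_singleton_iff]
        rcases hx1 with h | h
        · left; linarith [hx2.1, hx2.2]
        · right; linarith [hx2.1, hx2.2]
      refine measure_mono_null hss ?_
      have : ({0, 1} : Set ℝ).Finite := (Set.finite_singleton 1).insert 0
      exact this.measure_zero _
    rw [hE, ← Set.preimage_compl, h1, hU]
    exact h2
  have key : {ω | qtl ν (U ω) ≤ a} ∩ E = U ⁻¹' (Set.Iic (cdf' ν a) ∩ Set.Ioo 0 1) := by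
    ext ω
    simp only [Set.mem_inter_iff, Set.mem_setOf_eq, hE, Set.mem_preimage, Set.mem_Ioo,
      Set.mem_Iic]
    constructor
    · rintro ⟨hq, h0, h1⟩
      exact ⟨(qtl_le_iff ν hsupp (U ω) h0 h1 a).1 hq, h0, h1⟩
    · rintro ⟨hq, h0, h1⟩
      exact ⟨(qtl_le_iff ν hsupp (U ω) h0 h1 a).2 hq, h0, h1⟩
  have hFa0 : 0 ≤ cdf' ν a := ENNReal.toReal_nonneg
  have hFa1 : cdf' ν a ≤ 1 := cdf'_le_one ν a
  calc ℙ {ω | qtl ν (U ω) ≤ a} = ℙ ({ω | qtl ν (U ω) ≤ a} ∩ E) :=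
        (measure_inter_conull hEc).symm
    _ = ℙ (U ⁻¹' (Set.Iic (cdf' ν a) ∩ Set.Ioo 0 1)) := by rw [key]
    _ = (ℙ.map U) (Set.Iic (cdf' ν a) ∩ Set.Ioo 0 1) :=
        (Measure.map_apply hUm (measurableSet_Iic.inter measurableSet_Ioo)).symm
    _ = (volume.restrict (Set.Icc (0:ℝ) 1)) (Set.Iic (cdf' ν a) ∩ Set.Ioo 0 1) := by rw [hU]
    _ = volume (Set.Iic (cdf' ν a) ∩ Set.Ioo 0 1) := by
        rw [Measure.restrict_apply (measurableSet_Iic.inter measurableSet_Ioo)]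
        congr 1
        rw [Set.inter_assoc]
        congr 1
        rw [Set.inter_eq_left]
        exact fun x hx => ⟨hx.1.le, hx.2.le⟩
    _ = ENNReal.ofReal (cdf' ν a) := by
        rcases eq_or_lt_of_le hFa1 with h1 | h1
        · have : Set.Iic (cdf' ν a) ∩ Set.Ioo (0:ℝ) 1 = Set.Ioo 0 1 := by
            rw [Set.inter_eq_right]
            intro x hx
            simp only [Set.mem_Iic]
            rw [h1.symm] at *
            exact hx.2.le
          rw [this, Real.volume_Ioo, h1]
          norm_num
        · have : Set.Iic (cdf' ν a) ∩ Set.Ioo (0:ℝ) 1 = Set.Ioc 0 (cdf' ν a) := by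
            ext x
            simp only [Set.mem_inter_iff, Set.mem_Iic, Set.mem_Ioo, Set.mem_Ioc]
            constructor
            · rintro ⟨h2, h3, h4⟩; exact ⟨h3, h2⟩
            · rintro ⟨h2, h3⟩; exact ⟨h3, h2, lt_of_le_of_lt h3 h1⟩
          rw [this, Real.volume_Ioc]
          norm_num
    _ = ν (Set.Iic a) := by
        unfold cdf'
        exact ENNReal.ofReal_toReal (measure_ne_top ν _)

end Quantile

section Discretize

/-- dyadic grid -/
noncomputable def grid (m : ℕ) : Finset ℝ := by
  classical
  exact (Finset.range (m * 2^m + 1)).image (fun j : ℕ => (j:ℝ)/(2:ℝ)^m)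

/-- dyadic discretization, truncated at `m` -/
noncomputable def dsc (m : ℕ) (t : ℝ) : ℝ := min (m:ℝ) ((⌈t * 2^m⌉ : ℤ) / (2:ℝ)^m)

lemma dsc_mono (m : ℕ) : Monotone (dsc m) := by
  intro a b hab
  unfold dsc
  have h2 : (0:ℝ) < 2^m := by positivity
  refine min_le_min le_rfl ?_
  rw [div_le_div_iff_of_pos_right h2]
  exact_mod_cast Int.ceil_mono (mul_le_mul_of_nonneg_right hab h2.le)

lemma dsc_nonneg (m : ℕ) (t : ℝ) (ht : 0 ≤ t) : 0 ≤ dsc m t := by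
  unfold dsc
  have h2 : (0:ℝ) < 2^m := by positivity
  refine le_min (Nat.cast_nonneg m) (div_nonneg ?_ h2.le)
  exact_mod_cast Int.ceil_nonneg (by positivity : (0:ℝ) ≤ t * 2^m)

lemma dsc_bounds (m : ℕ) (t : ℝ) (htm : t ≤ m) :
    t ≤ dsc m t ∧ dsc m t ≤ t + ((2:ℝ)^m)⁻¹ := by
  have h2 : (0:ℝ) < 2^m := by positivity
  constructor
  · refine le_min htm ?_
    rw [le_div_iff₀ h2]
    exact Int.le_ceil _
  · have h3 : ((⌈t * 2^m⌉:ℤ):ℝ) < t * 2^m + 1 := Int.ceil_lt_add_one _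
    calc dsc m t ≤ ((⌈t * 2^m⌉:ℤ):ℝ) / 2^m := min_le_right _ _
      _ ≤ (t * 2^m + 1) / 2^m := by
          rw [div_le_div_iff_of_pos_right h2]; exact h3.le
      _ = t + ((2:ℝ)^m)⁻¹ := by field_simp
  
lemma dsc_tendsto (t : ℝ) : Filter.Tendsto (fun m => dsc m t) Filter.atTop (nhds t) := by
  have hup : Filter.Tendsto (fun m : ℕ => t + ((2:ℝ)^m)⁻¹) Filter.atTop (nhds t) := by
    have h1 : Filter.Tendsto (fun m : ℕ => ((2:ℝ)^m)⁻¹) Filter.atTop (nhds 0) := by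
      apply tendsto_inv_atTop_zero.comp
      exact tendsto_pow_atTop_atTop_of_one_lt one_lt_two
    have := (tendsto_const_nhds :
      Filter.Tendsto (fun _ : ℕ => t) Filter.atTop (nhds t)).add h1
    simpa using this
  apply tendsto_of_tendsto_of_tendsto_of_le_of_le' tendsto_const_nhds hup
  · filter_upwards [Filter.eventually_ge_atTop ⌈t⌉₊] with m hm
    exact (dsc_bounds m t (le_trans (Nat.le_ceil t) (Nat.cast_le.2 hm))).1
  · filter_upwards [Filter.eventually_ge_atTop ⌈t⌉₊] with m hm
    exact (dsc_bounds m t (le_trans (Nat.le_ceil t) (Nat.cast_le.2 hm))).2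

lemma dsc_mem_grid (m : ℕ) (t : ℝ) (ht : 0 ≤ t) : dsc m t ∈ grid m := by
  have h2 : (0:ℝ) < 2^m := by positivity
  set j : ℤ := min ((m : ℤ) * 2^m) ⌈t * 2^m⌉ with hj
  have hmm : ((m:ℝ) * 2^m) / 2^m = (m:ℝ) := by field_simp
  have hdsc : dsc m t = (j:ℝ) / 2^m := by
    rw [hj]
    push_cast
    unfold dsc
    rw [← hmm, min_div_div_right h2.le, hmm]
  have hj0 : 0 ≤ j := le_min (by positivity) (Int.ceil_nonneg (by positivity : (0:ℝ) ≤ t * 2^m))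
  have hjle : j ≤ (m : ℤ) * 2^m := min_le_left _ _
  rw [hdsc]
  rw [grid]
  apply Finset.mem_image.2
  refine ⟨j.toNat, Finset.mem_range.2 ?_, ?_⟩
  · have : (j.toNat : ℤ) ≤ (m:ℤ) * 2^m := by rwa [Int.toNat_of_nonneg hj0]
    have h4 : j.toNat ≤ m * 2^m := by exact_mod_cast this
    omega
  · congr 1
    exact_mod_cast congrArg (fun z : ℤ => (z : ℝ)) (Int.toNat_of_nonneg hj0)

lemma grid_nonneg (m : ℕ) (t : ℝ) (ht : t ∈ grid m) : 0 ≤ t := by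
  obtain ⟨j, _, rfl⟩ := Finset.mem_image.1 ht
  show (0:ℝ) ≤ (j:ℝ)/(2:ℝ)^m
  positivity

end Discretize

section FiniteValued

variable {Ω : Type} [MeasurableSpace Ω] (ℙ : Measure Ω) [IsProbabilityMeasure ℙ]
variable {α : Type*} [MeasurableSpace α] [MeasurableSingletonClass α]

lemma integral_finite_valued (W : Ω → α) (hW : Measurable W) (S : Finset α)
    (hWS : ∀ ω, W ω ∈ S) (f : α → ℝ) :
    ∫ ω, f (W ω) ∂ℙ = ∑ v ∈ S, (ℙ {ω | W ω = v}).toReal * f v := by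
  classical
  have hms : ∀ v : α, MeasurableSet {ω | W ω = v} := fun v => hW (measurableSet_singleton v)
  have hrep : (fun ω => f (W ω))
      = fun ω => ∑ v ∈ S, Set.indicator {ω' | W ω' = v} (fun _ => f v) ω := by
    funext ω
    rw [Finset.sum_eq_single (W ω)]
    · rw [Set.indicator_of_mem (by exact rfl : ω ∈ {ω' | W ω' = W ω})]
    · intro v _ hv
      exact Set.indicator_of_notMem (fun h => hv (Eq.symm h)) _
    · intro h; exact absurd (hWS ω) h
  rw [hrep, integral_finset_sum]
  · refine Finset.sum_congr rfl fun v _ => ?_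
    rw [integral_indicator_const (f v) (hms v), smul_eq_mul]; rfl
  · intro v _
    exact (integrable_const (f v)).indicator (hms v)

lemma measure_fiber_sum {n : ℕ} (W : Ω → Fin n → ℝ) (hW : Measurable W)
    (S : Finset (Fin n → ℝ)) (hWS : ∀ ω, W ω ∈ S) (i : Fin n) (t : ℝ) :
    (ℙ {ω | W ω i = t}).toReal
      = ∑ v ∈ S, (if v i = t then (ℙ {ω | W ω = v}).toReal else 0) := by
  classical
  have hms : ∀ v : Fin n → ℝ, MeasurableSet {ω | W ω = v} :=
    fun v => hW (measurableSet_singleton v)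
  have hset : {ω | W ω i = t} = ⋃ v ∈ S.filter (fun v => v i = t), {ω | W ω = v} := by
    ext ω
    simp only [Set.mem_setOf_eq, Set.mem_iUnion, Finset.mem_filter]
    constructor
    · intro h
      exact ⟨W ω, ⟨hWS ω, h⟩, rfl⟩
    · rintro ⟨v, ⟨_, hv⟩, rfl⟩
      exact hv
  have hdisj : (↑(S.filter (fun v => v i = t)) : Set (Fin n → ℝ)).PairwiseDisjoint
      (fun v => {ω | W ω = v}) := by
    intro v _ v' _ hvv'
    apply Set.disjoint_left.2
    intro ω h1 h2
    exact hvv' (h1.symm.trans h2)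
  rw [hset, measure_biUnion_finset hdisj (fun v _ => hms v),
    ENNReal.toReal_sum (fun v _ => measure_ne_top ℙ _), Finset.sum_filter]

end FiniteValued


section Glue

variable {n : ℕ} (π : Fin n → Fin n → ℝ) (pb : Fin n → ℝ)
variable (P : (Fin n → ℝ) → (Fin n → ℝ))

/-- monotonicity of the quantile function below 1 -/
lemma qtl_mono (ν : Measure ℝ) [IsProbabilityMeasure ν] (u u' : ℝ) (h : u ≤ u')
    (hu'1 : u' < 1) : qtl ν u ≤ qtl ν u' :=
  csInf_le_csInf ⟨0, fun t ht => ht.1⟩ (exists_cdf'_ge ν u' hu'1)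
    (fun t ht => ⟨ht.1, h.trans ht.2⟩)

variable {Ω : Type} [MeasurableSpace Ω]

lemma measurable_P_comp (hn : 0 < n)
    (hPb : ∀ x : Fin n → ℝ, (∀ i, 0 ≤ x i) → ∀ i, 0 ≤ P x i ∧ P x i ≤ pb i)
    (hPe : ∀ x : Fin n → ℝ, (∀ i, 0 ≤ x i) →
      ∀ i, P x i = min (pb i) (x i + ∑ j, π j i * P x j))
    (hπ0 : ∀ j i, 0 ≤ π j i) (hrs : ∀ j, ∑ i, π j i < 1) (hpb : ∀ i, 0 < pb i)
    (Y : Ω → Fin n → ℝ) (hYm : Measurable Y) (hYpos : ∀ ω i, 0 ≤ Y ω i) (j : Fin n) :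
    Measurable fun ω => P (Y ω) j := by
  have hgeo : Tendsto (fun k : ℕ => (kap π hn)^k * ∑ i, pb i) atTop (nhds 0) := by
    rw [show (0:ℝ) = 0 * ∑ i, pb i by ring]
    exact Tendsto.mul_const _
      (tendsto_pow_atTop_nhds_zero_of_lt_one (kap_nonneg π hn hπ0) (kap_lt_one π hn hrs))
  apply measurable_of_tendsto_metrizable (f := fun k ω => iter π pb k (Y ω) j)
  · intro k
    exact ((iter_continuous π pb k j).measurable).comp hYm
  · rw [tendsto_pi_nhds]
    intro ω
    have hbound : ∀ k : ℕ, |iter π pb k (Y ω) j - P (Y ω) j| ≤ (kap π hn)^k * ∑ i, pb i := by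
      intro k
      calc |iter π pb k (Y ω) j - P (Y ω) j|
          ≤ ∑ i, |iter π pb k (Y ω) i - P (Y ω) i| :=
            Finset.single_le_sum (f := fun i => |iter π pb k (Y ω) i - P (Y ω) i|)
              (fun i _ => abs_nonneg _) (Finset.mem_univ j)
        _ ≤ (kap π hn)^k * ∑ i, pb i :=
            iter_rate π pb P hPb hPe hn hπ0 hpb (Y ω) (fun i => hYpos ω i) k
    have habs : Tendsto (fun k : ℕ => |iter π pb k (Y ω) j - P (Y ω) j|) atTop (nhds 0) :=
      squeeze_zero (fun k => abs_nonneg _) hbound hgeo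
    rw [tendsto_iff_dist_tendsto_zero]
    simpa [Real.dist_eq] using habs

lemma measurable_g_comp (hn : 0 < n)
    (hPb : ∀ x : Fin n → ℝ, (∀ i, 0 ≤ x i) → ∀ i, 0 ≤ P x i ∧ P x i ≤ pb i)
    (hPe : ∀ x : Fin n → ℝ, (∀ i, 0 ≤ x i) →
      ∀ i, P x i = min (pb i) (x i + ∑ j, π j i * P x j))
    (hπ0 : ∀ j i, 0 ≤ π j i) (hrs : ∀ j, ∑ i, π j i < 1) (hpb : ∀ i, 0 < pb i)
    (Y : Ω → Fin n → ℝ) (hYm : Measurable Y) (hYpos : ∀ ω i, 0 ≤ Y ω i) :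
    Measurable fun ω => gfun π P (Y ω) := by
  unfold gfun
  apply Finset.measurable_sum
  intro j _
  exact (measurable_P_comp π pb P hn hPb hPe hπ0 hrs hpb Y hYm hYpos j).const_mul _

/-- integral-level total-equity identity -/
lemma integral_identity (ℙ : Measure Ω) [IsProbabilityMeasure ℙ] (hn : 0 < n)
    (hPb : ∀ x : Fin n → ℝ, (∀ i, 0 ≤ x i) → ∀ i, 0 ≤ P x i ∧ P x i ≤ pb i)
    (hPe : ∀ x : Fin n → ℝ, (∀ i, 0 ≤ x i) →
      ∀ i, P x i = min (pb i) (x i + ∑ j, π j i * P x j))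
    (hπ0 : ∀ j i, 0 ≤ π j i) (hrs : ∀ j, ∑ i, π j i < 1) (hpb : ∀ i, 0 < pb i)
    (Y : Ω → Fin n → ℝ) (hYm : Measurable Y) (hYpos : ∀ ω i, 0 ≤ Y ω i)
    (hYint : ∀ i, Integrable (fun ω => Y ω i) ℙ) :
    ∑ i, ∫ ω, max (Y ω i + (∑ j, π j i * P (Y ω) j) - pb i) 0 ∂ℙ
      = (∑ i, ∫ ω, Y ω i ∂ℙ) - ∫ ω, gfun π P (Y ω) ∂ℙ := by
  have hPm : ∀ j, Measurable fun ω => P (Y ω) j :=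
    fun j => measurable_P_comp π pb P hn hPb hPe hπ0 hrs hpb Y hYm hYpos j
  have hPint : ∀ j, Integrable (fun ω => P (Y ω) j) ℙ := by
    intro j
    apply Integrable.mono' (integrable_const (pb j)) (hPm j).aestronglyMeasurable
    filter_upwards with ω
    have h1 := (hPb (Y ω) (hYpos ω) j).1
    have h2 := (hPb (Y ω) (hYpos ω) j).2
    rw [Real.norm_eq_abs, abs_of_nonneg h1]
    exact h2
  have hSint : ∀ i, Integrable (fun ω => ∑ j, π j i * P (Y ω) j) ℙ :=
    fun i => integrable_finset_sum _ fun j _ => (hPint j).const_mul _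
  -- rewrite each integrand by the pointwise identity
  have hstep : ∀ i, ∫ ω, max (Y ω i + (∑ j, π j i * P (Y ω) j) - pb i) 0 ∂ℙ
      = ∫ ω, Y ω i ∂ℙ + ∑ j, π j i * ∫ ω, P (Y ω) j ∂ℙ - ∫ ω, P (Y ω) i ∂ℙ := by
    intro i
    have h1 : ∀ ω, max (Y ω i + (∑ j, π j i * P (Y ω) j) - pb i) 0
        = Y ω i + (∑ j, π j i * P (Y ω) j) - P (Y ω) i :=
      fun ω => max_identity π pb P hPe (Y ω) (hYpos ω) i
    rw [show (fun ω => max (Y ω i + (∑ j, π j i * P (Y ω) j) - pb i) 0)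
        = fun ω => Y ω i + (∑ j, π j i * P (Y ω) j) - P (Y ω) i from funext h1]
    have hadd : Integrable (fun ω => Y ω i + ∑ j, π j i * P (Y ω) j) ℙ :=
      (hYint i).add (hSint i)
    rw [integral_sub hadd (hPint i), integral_add (hYint i) (hSint i)]
    congr 2
    rw [integral_finset_sum _ (fun j _ => (hPint j).const_mul _)]
    exact Finset.sum_congr rfl fun j _ => integral_const_mul _ _
  have hgint : ∫ ω, gfun π P (Y ω) ∂ℙ = ∑ j, (1 - ∑ i, π j i) * ∫ ω, P (Y ω) j ∂ℙ := by
    unfold gfun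
    rw [integral_finset_sum _ (fun j _ => (hPint j).const_mul _)]
    exact Finset.sum_congr rfl fun j _ => integral_const_mul _ _
  rw [Finset.sum_congr rfl fun i _ => hstep i, hgint]
  rw [Finset.sum_sub_distrib, Finset.sum_add_distrib]
  have h2 : ∑ i, ∑ j, π j i * ∫ ω, P (Y ω) j ∂ℙ
      = ∑ j, (∑ i, π j i) * ∫ ω, P (Y ω) j ∂ℙ := by
    rw [Finset.sum_comm]
    exact Finset.sum_congr rfl fun j _ => by rw [Finset.sum_mul]
  have h3 : ∑ j, (1 - ∑ i, π j i) * ∫ ω, P (Y ω) j ∂ℙ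
      = ∑ j, ∫ ω, P (Y ω) j ∂ℙ - ∑ j, (∑ i, π j i) * ∫ ω, P (Y ω) j ∂ℙ := by
    rw [← Finset.sum_sub_distrib]
    exact Finset.sum_congr rfl fun j _ => by ring
  rw [h2, h3]
  ring

lemma unif_good_event (ℙ : Measure Ω) (U : Ω → ℝ) (hUm : Measurable U)
    (hU : ℙ.map U = volume.restrict (Set.Icc (0:ℝ) 1)) :
    ℙ (U ⁻¹' (Set.Ioo (0:ℝ) 1))ᶜ = 0 := by
  have h1 : ℙ (U ⁻¹' (Set.Ioo (0:ℝ) 1)ᶜ) = (ℙ.map U) (Set.Ioo (0:ℝ) 1)ᶜ :=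
    (Measure.map_apply hUm measurableSet_Ioo.compl).symm
  have h2 : (volume.restrict (Set.Icc (0:ℝ) 1)) (Set.Ioo (0:ℝ) 1)ᶜ = 0 := by
    rw [Measure.restrict_apply measurableSet_Ioo.compl]
    have hss : (Set.Ioo (0:ℝ) 1)ᶜ ∩ Set.Icc (0:ℝ) 1 ⊆ {0, 1} := by
      intro x hx
      obtain ⟨hx1, hx2⟩ := hx
      simp only [Set.mem_compl_iff, Set.mem_Ioo, not_and_or, not_lt] at hx1
      rw [Set.mem_Icc] at hx2
      simp only [Set.mem_insert_iff, Set.mem_singleton_iff]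
      rcases hx1 with h | h
      · left; linarith [hx2.1, hx2.2]
      · right; linarith [hx2.1, hx2.2]
    refine measure_mono_null hss ?_
    have : ({0, 1} : Set ℝ).Finite := (Set.finite_singleton 1).insert 0
    exact this.measure_zero _
  rw [← Set.preimage_compl, h1, hU]
  exact h2

/-- core comparison: comonotone endowments minimize expected payments to society -/
lemma integral_g_comparison (ℙ : Measure Ω) [IsProbabilityMeasure ℙ] (hn : 0 < n)
    (hPb : ∀ x : Fin n → ℝ, (∀ i, 0 ≤ x i) → ∀ i, 0 ≤ P x i ∧ P x i ≤ pb i)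
    (hPe : ∀ x : Fin n → ℝ, (∀ i, 0 ≤ x i) →
      ∀ i, P x i = min (pb i) (x i + ∑ j, π j i * P x j))
    (hπ0 : ∀ j i, 0 ≤ π j i) (hrs : ∀ j, ∑ i, π j i < 1) (hpb : ∀ i, 0 < pb i)
    (X : Ω → Fin n → ℝ) (hXm : Measurable X) (hXpos : ∀ ω i, 0 ≤ X ω i)
    (U : Ω → ℝ) (hUm : Measurable U)
    (hU : ℙ.map U = volume.restrict (Set.Icc (0:ℝ) 1))
    (Z : Ω → Fin n → ℝ)
    (hZq : ∀ ω i, Z ω i = qtl (Measure.map (fun ω' => X ω' i) ℙ) (U ω)) :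
    ∫ ω, gfun π P (Z ω) ∂ℙ ≤ ∫ ω, gfun π P (X ω) ∂ℙ := by
  classical
  have hXim : ∀ i, Measurable fun ω => X ω i := fun i => (measurable_pi_apply i).comp hXm
  set ν : Fin n → Measure ℝ := fun i => Measure.map (fun ω' => X ω' i) ℙ with hνdef
  have hPMν : ∀ i, IsProbabilityMeasure (ν i) :=
    fun i => Measure.isProbabilityMeasure_map (hXim i).aemeasurable
  have hsupp : ∀ i, ν i (Set.Iio 0) = 0 := by
    intro i
    rw [hνdef]
    simp only
    rw [Measure.map_apply (hXim i) measurableSet_Iio]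
    have : (fun ω' => X ω' i) ⁻¹' Set.Iio 0 = ∅ := by
      ext ω'
      simp only [Set.mem_preimage, Set.mem_Iio, Set.mem_empty_iff_false, iff_false, not_lt]
      exact hXpos ω' i
    rw [this, measure_empty]
  have hZpos : ∀ ω i, 0 ≤ Z ω i := by
    intro ω i
    rw [hZq ω i]
    haveI := hPMν i
    exact qtl_nonneg _ _
  have hZfun : Z = fun ω i => qtl (ν i) (U ω) := funext fun ω => funext fun i => hZq ω i
  have hZim : ∀ i, Measurable fun ω => Z ω i := by
    intro i
    haveI := hPMν i
    have : (fun ω => Z ω i) = fun ω => qtl (ν i) (U ω) := funext fun ω => hZq ω i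
    rw [this]
    exact (qtl_measurable _).comp hUm
  have hZm : Measurable Z := by
    rw [hZfun]
    refine measurable_pi_lambda _ fun i => ?_
    haveI := hPMν i
    exact (qtl_measurable _).comp hUm
  have hmapZ : ∀ i, Measure.map (fun ω => Z ω i) ℙ = ν i := by
    intro i
    haveI := hPMν i
    have h1 : (fun ω => Z ω i) = fun ω => qtl (ν i) (U ω) := funext fun ω => hZq ω i
    rw [h1]
    exact map_qtl_eq (ν i) ℙ U hUm hU (hsupp i)
  have hEc : ℙ (U ⁻¹' (Set.Ioo (0:ℝ) 1))ᶜ = 0 := unif_good_event ℙ U hUm hU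
  -- discretized comparison
  have hstep : ∀ m : ℕ, ∫ ω, gfun π P (fun i => dsc m (Z ω i)) ∂ℙ
      ≤ ∫ ω, gfun π P (fun i => dsc m (X ω i)) ∂ℙ := by
    intro m
    set S : Finset (Fin n → ℝ) := Fintype.piFinset (fun _ : Fin n => grid m) with hSdef
    set Xm : Ω → Fin n → ℝ := fun ω i => dsc m (X ω i) with hXmdef
    set Zm : Ω → Fin n → ℝ := fun ω i => dsc m (Z ω i) with hZmdef
    have hSnn : ∀ v ∈ S, ∀ i, 0 ≤ v i :=
      fun v hv i => grid_nonneg m _ (Fintype.mem_piFinset.1 hv i)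
    have hXmm : Measurable Xm := measurable_pi_lambda _ fun i =>
      ((dsc_mono m).measurable).comp (hXim i)
    have hZmm : Measurable Zm := measurable_pi_lambda _ fun i =>
      ((dsc_mono m).measurable).comp (hZim i)
    have hXmS : ∀ ω, Xm ω ∈ S := fun ω =>
      Fintype.mem_piFinset.2 fun i => dsc_mem_grid m _ (hXpos ω i)
    have hZmS : ∀ ω, Zm ω ∈ S := fun ω =>
      Fintype.mem_piFinset.2 fun i => dsc_mem_grid m _ (hZpos ω i)
    letI : DecidableEq {v // v ∈ S} := Classical.decEq _
    set wX : {v // v ∈ S} → ℝ := fun v => (ℙ {ω | Xm ω = v.1}).toReal with hwXdef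
    set wZ : {v // v ∈ S} → ℝ := fun v => (ℙ {ω | Zm ω = v.1}).toReal with hwZdef
    have hlat : ∀ a b : {v // v ∈ S}, ∃ c d : {v // v ∈ S},
        c.1 = a.1 ⊔ b.1 ∧ d.1 = a.1 ⊓ b.1 := by
      intro a b
      have hc : a.1 ⊔ b.1 ∈ S := by
        refine Fintype.mem_piFinset.2 fun i => ?_
        rw [Pi.sup_apply]
        rcases le_total (a.1 i) (b.1 i) with h | h
        · rw [sup_eq_right.2 h]; exact Fintype.mem_piFinset.1 b.2 i
        · rw [sup_eq_left.2 h]; exact Fintype.mem_piFinset.1 a.2 i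
      have hd : a.1 ⊓ b.1 ∈ S := by
        refine Fintype.mem_piFinset.2 fun i => ?_
        rw [Pi.inf_apply]
        rcases le_total (a.1 i) (b.1 i) with h | h
        · rw [inf_eq_left.2 h]; exact Fintype.mem_piFinset.1 a.2 i
        · rw [inf_eq_right.2 h]; exact Fintype.mem_piFinset.1 b.2 i
      exact ⟨⟨_, hc⟩, ⟨_, hd⟩, rfl, rfl⟩
    have hsubmod : ∀ a b : {v // v ∈ S},
        gfun π P (a.1 ⊔ b.1) + gfun π P (a.1 ⊓ b.1) ≤ gfun π P a.1 + gfun π P b.1 :=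
      fun a b => gfun_submod π pb P hPb hPe hn hπ0 hrs hpb a.1 b.1
        (hSnn a.1 a.2) (hSnn b.1 b.2)
    have hchain : ∀ v v' : {v // v ∈ S}, wZ v ≠ 0 → wZ v' ≠ 0 →
        v.1 ≤ v'.1 ∨ v'.1 ≤ v.1 := by
      intro v v' hv hv'
      have hgood : ∀ u : {v // v ∈ S}, wZ u ≠ 0 →
          ∃ ω, Zm ω = u.1 ∧ U ω ∈ Set.Ioo (0:ℝ) 1 := by
        intro u hu
        have hne : ℙ ({ω | Zm ω = u.1} ∩ U ⁻¹' Set.Ioo (0:ℝ) 1) ≠ 0 := by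
          rw [measure_inter_conull hEc]
          intro h
          exact hu (by rw [hwZdef]; simp only; rw [h, ENNReal.toReal_zero])
        obtain ⟨ω, hω1, hω2⟩ := MeasureTheory.nonempty_of_measure_ne_zero hne
        exact ⟨ω, hω1, hω2⟩
      obtain ⟨ω, hω, hωE⟩ := hgood v hv
      obtain ⟨ω', hω', hωE'⟩ := hgood v' hv'
      rcases le_total (U ω) (U ω') with h | h
      · left
        intro i
        rw [← hω, ← hω']
        show dsc m (Z ω i) ≤ dsc m (Z ω' i)
        apply dsc_mono
        rw [hZq ω i, hZq ω' i]
        haveI := hPMν i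
        exact qtl_mono _ _ _ h hωE'.2
      · right
        intro i
        rw [← hω, ← hω']
        show dsc m (Z ω' i) ≤ dsc m (Z ω i)
        apply dsc_mono
        rw [hZq ω i, hZq ω' i]
        haveI := hPMν i
        exact qtl_mono _ _ _ h hωE.2
    have hfiber : ∀ (W : Ω → Fin n → ℝ), Measurable W → (∀ ω, W ω ∈ S) →
        ∀ (w : {v // v ∈ S} → ℝ), (w = fun v => (ℙ {ω | W ω = v.1}).toReal) →
        ∀ i t, mrg Subtype.val w i t = (ℙ {ω | W ω i = t}).toReal := by
      intro W hW hWS w hw i t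
      unfold mrg WS cind
      rw [hw]
      have h1 : ∀ v : {v // v ∈ S}, (ℙ {ω | W ω = v.1}).toReal * (if v.1 i = t then (1:ℝ) else 0)
          = (if v.1 i = t then (ℙ {ω | W ω = v.1}).toReal else 0) := by
        intro v; by_cases h : v.1 i = t <;> simp [h]
      rw [Finset.sum_congr rfl fun v _ => h1 v]
      rw [show ∑ v : {v // v ∈ S}, (if v.1 i = t then (ℙ {ω | W ω = v.1}).toReal else 0)
          = ∑ u ∈ S, (if u i = t then (ℙ {ω | W ω = u}).toReal else 0) from
        Finset.sum_coe_sort S (fun u => if u i = t then (ℙ {ω | W ω = u}).toReal else 0)]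
      exact (measure_fiber_sum ℙ W hW S hWS i t).symm
    have hmargW : ∀ i t, mrg Subtype.val wZ i t = mrg Subtype.val wX i t := by
      intro i t
      rw [hfiber Zm hZmm hZmS wZ rfl i t, hfiber Xm hXmm hXmS wX rfl i t]
      have hB : MeasurableSet (dsc m ⁻¹' {t}) :=
        (dsc_mono m).measurable (measurableSet_singleton t)
      have h1 : {ω | Zm ω i = t} = (fun ω => Z ω i) ⁻¹' (dsc m ⁻¹' {t}) := rfl
      have h2 : {ω | Xm ω i = t} = (fun ω => X ω i) ⁻¹' (dsc m ⁻¹' {t}) := rfl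
      rw [h1, h2, ← Measure.map_apply (hZim i) hB, ← Measure.map_apply (hXim i) hB, hmapZ i]
    have hcomp := finite_comparison hn (Subtype.val : {v // v ∈ S} → (Fin n → ℝ))
      Subtype.val_injective hlat (gfun π P) hsubmod wX wZ
      (fun v => ENNReal.toReal_nonneg) (fun v => ENNReal.toReal_nonneg) hchain hmargW
    have hvalZ : WS wZ (fun v => gfun π P v.1) = ∫ ω, gfun π P (Zm ω) ∂ℙ := by
      unfold WS
      rw [integral_finite_valued ℙ Zm hZmm S hZmS (gfun π P)]
      exact Finset.sum_coe_sort S (fun u => (ℙ {ω | Zm ω = u}).toReal * gfun π P u)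
    have hvalX : WS wX (fun v => gfun π P v.1) = ∫ ω, gfun π P (Xm ω) ∂ℙ := by
      unfold WS
      rw [integral_finite_valued ℙ Xm hXmm S hXmS (gfun π P)]
      exact Finset.sum_coe_sort S (fun u => (ℙ {ω | Xm ω = u}).toReal * gfun π P u)
    rw [← hvalZ, ← hvalX]
    exact hcomp
  -- pass to the limit
  have hDCT : ∀ (Y : Ω → Fin n → ℝ), Measurable Y → (∀ ω i, 0 ≤ Y ω i) →
      Tendsto (fun m => ∫ ω, gfun π P (fun i => dsc m (Y ω i)) ∂ℙ) atTop
        (nhds (∫ ω, gfun π P (Y ω) ∂ℙ)) := by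
    intro Y hYm hYpos
    apply MeasureTheory.tendsto_integral_of_dominated_convergence (fun _ => ∑ i, pb i)
    · intro m
      exact (measurable_g_comp π pb P hn hPb hPe hπ0 hrs hpb
        (fun ω i => dsc m (Y ω i))
        (measurable_pi_lambda _ fun i => ((dsc_mono m).measurable).comp
          ((measurable_pi_apply i).comp hYm))
        (fun ω i => dsc_nonneg m _ (hYpos ω i))).aestronglyMeasurable
    · exact integrable_const _
    · intro m
      filter_upwards with ω
      rw [Real.norm_eq_abs, abs_of_nonneg (gfun_nonneg π pb P hPb hrs _
        (fun i => dsc_nonneg m _ (hYpos ω i)))]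
      exact gfun_le π pb P hPb hπ0 hrs _ (fun i => dsc_nonneg m _ (hYpos ω i))
    · filter_upwards with ω
      have hb : ∀ m : ℕ, |gfun π P (fun i => dsc m (Y ω i)) - gfun π P (Y ω)|
          ≤ ∑ i, |dsc m (Y ω i) - Y ω i| :=
        fun m => gfun_lip π pb P hPb hPe hπ0 hrs _ (Y ω)
          (fun i => dsc_nonneg m _ (hYpos ω i)) (hYpos ω)
      have h1 : Tendsto (fun m : ℕ => ∑ i, |dsc m (Y ω i) - Y ω i|) atTop (nhds 0) := by
        have := tendsto_finset_sum (Finset.univ : Finset (Fin n))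
          (fun i _ => (((dsc_tendsto (Y ω i)).sub tendsto_const_nhds).abs :
            Tendsto (fun m : ℕ => |dsc m (Y ω i) - Y ω i|) atTop (nhds |Y ω i - Y ω i|)))
        simpa using this
      have habs : Tendsto (fun m : ℕ => |gfun π P (fun i => dsc m (Y ω i)) - gfun π P (Y ω)|)
          atTop (nhds 0) := squeeze_zero (fun m => abs_nonneg _) hb h1
      rw [tendsto_iff_dist_tendsto_zero]
      simpa [Real.dist_eq] using habs
  exact le_of_tendsto_of_tendsto' (hDCT Z hZm hZpos) (hDCT X hXm hXpos) hstep

end Glue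

end ENProof
end

open ENProof in
/-- In the Eisenberg–Noe setting under the regularity assumption, for an integrable random
endowment vector `X` and its comonotonic version `Z_i = F_{X_i}^{-1}(U)` (with `U` uniform on
`[0,1]`), the total expected equity of the banking sector is maximized by the comonotonic
endowments: `Σ_i 𝔼[V_i(X)⁺] ≤ Σ_i 𝔼[V_i(Z)⁺]`. -/
theorem comonotonic_maximizes_total_equity (n : ℕ) (hn : 1 ≤ n)
    (L : Matrix (Fin n) (Fin (n + 1)) ℝ)
    (hL : ∀ i j, 0 ≤ L i j) (hLdiag : ∀ i : Fin n, L i i.castSucc = 0)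
    (hreg : ∀ i, 0 < pbar L i ∧ ∑ j, relLiab L i j < 1)
    (P : (Fin n → ℝ) → (Fin n → ℝ))
    (hP : ∀ x : Fin n → ℝ, (∀ i, 0 ≤ x i) → IsGreatestClearingPayment L x (P x))
    (Ω : Type) (mΩ : MeasurableSpace Ω) (ℙ : Measure Ω) (hprob : IsProbabilityMeasure ℙ)
    (X : Ω → Fin n → ℝ) (hXm : Measurable X) (hXpos : ∀ ω i, 0 ≤ X ω i)
    (hXint : ∀ i, Integrable (fun ω => X ω i) ℙ)
    (U : Ω → ℝ) (hUm : Measurable U)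
    (hU : ℙ.map U = volume.restrict (Set.Icc (0 : ℝ) 1))
    (Z : Ω → Fin n → ℝ)
    (hZ : ∀ ω i, Z ω i = sInf {t : ℝ | 0 ≤ t ∧ U ω ≤ (ℙ {ω' | X ω' i ≤ t}).toReal}) :
    ∑ i, ∫ ω, max (X ω i + (∑ j, relLiab L j i * P (X ω) j) - pbar L i) 0 ∂ℙ
      ≤ ∑ i, ∫ ω, max (Z ω i + (∑ j, relLiab L j i * P (Z ω) j) - pbar L i) 0 ∂ℙ := by
  classical
  have hn' : 0 < n := hn
  set π : Fin n → Fin n → ℝ := relLiab L with hπdef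
  set pb : Fin n → ℝ := pbar L with hpbdef
  have hpb : ∀ i, 0 < pb i := fun i => (hreg i).1
  have hπ0 : ∀ j i, 0 ≤ π j i := by
    intro j i
    rw [hπdef]
    unfold relLiab
    split
    · exact div_nonneg (hL j _) (le_of_lt (by assumption))
    · exact le_rfl
  have hrs : ∀ j, ∑ i, π j i < 1 := fun j => (hreg j).2
  have hPb : ∀ x : Fin n → ℝ, (∀ i, 0 ≤ x i) → ∀ i, 0 ≤ P x i ∧ P x i ≤ pb i :=
    fun x hx => ((hP x hx).1).1
  have hPe : ∀ x : Fin n → ℝ, (∀ i, 0 ≤ x i) →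
      ∀ i, P x i = min (pb i) (x i + ∑ j, π j i * P x j) :=
    fun x hx => ((hP x hx).1).2
  have hXim : ∀ i, Measurable fun ω => X ω i := fun i => (measurable_pi_apply i).comp hXm
  set ν : Fin n → Measure ℝ := fun i => Measure.map (fun ω' => X ω' i) ℙ with hνdef
  have hPMν : ∀ i, IsProbabilityMeasure (ν i) :=
    fun i => Measure.isProbabilityMeasure_map (hXim i).aemeasurable
  have hZq : ∀ ω i, Z ω i = qtl (ν i) (U ω) := by
    intro ω i
    rw [hZ ω i]
    unfold qtl cdf'
    congr 1
    ext t
    rw [hνdef]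
    simp only [Set.mem_setOf_eq]
    rw [Measure.map_apply (hXim i) measurableSet_Iic]
    rfl
  have hsupp : ∀ i, ν i (Set.Iio 0) = 0 := by
    intro i
    rw [hνdef]
    simp only
    rw [Measure.map_apply (hXim i) measurableSet_Iio]
    have : (fun ω' => X ω' i) ⁻¹' Set.Iio 0 = ∅ := by
      ext ω'
      simp only [Set.mem_preimage, Set.mem_Iio, Set.mem_empty_iff_false, iff_false, not_lt]
      exact hXpos ω' i
    rw [this, measure_empty]
  have hZpos : ∀ ω i, 0 ≤ Z ω i := by
    intro ω i
    rw [hZq ω i]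
    haveI := hPMν i
    exact qtl_nonneg _ _
  have hZim : ∀ i, Measurable fun ω => Z ω i := by
    intro i
    haveI := hPMν i
    have : (fun ω => Z ω i) = fun ω => qtl (ν i) (U ω) := funext fun ω => hZq ω i
    rw [this]
    exact (qtl_measurable _).comp hUm
  have hZm : Measurable Z := by
    have : Z = fun ω i => qtl (ν i) (U ω) := funext fun ω => funext fun i => hZq ω i
    rw [this]
    refine measurable_pi_lambda _ fun i => ?_
    haveI := hPMν i
    exact (qtl_measurable _).comp hUm
  have hmapZ : ∀ i, Measure.map (fun ω => Z ω i) ℙ = ν i := by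
    intro i
    haveI := hPMν i
    have h1 : (fun ω => Z ω i) = fun ω => qtl (ν i) (U ω) := funext fun ω => hZq ω i
    rw [h1]
    exact map_qtl_eq (ν i) ℙ U hUm hU (hsupp i)
  have hZint : ∀ i, Integrable (fun ω => Z ω i) ℙ := by
    intro i
    haveI := hPMν i
    have h1 : Integrable (id : ℝ → ℝ) (ν i) := by
      rw [hνdef]
      simp only
      exact (integrable_map_measure aestronglyMeasurable_id (hXim i).aemeasurable).2 (hXint i)
    have h2 : Integrable (id : ℝ → ℝ) (Measure.map (fun ω => Z ω i) ℙ) := by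
      rw [hmapZ i]; exact h1
    exact (integrable_map_measure aestronglyMeasurable_id (hZim i).aemeasurable).1 h2
  have hintZX : ∀ i, ∫ ω, Z ω i ∂ℙ = ∫ ω, X ω i ∂ℙ := by
    intro i
    have e1 : ∫ t, (id t : ℝ) ∂(ν i) = ∫ ω, X ω i ∂ℙ := by
      rw [hνdef]
      simp only
      exact integral_map (hXim i).aemeasurable aestronglyMeasurable_id
    have e2 : ∫ t, (id t : ℝ) ∂(ν i) = ∫ ω, Z ω i ∂ℙ := by
      rw [← hmapZ i]
      exact integral_map (hZim i).aemeasurable aestronglyMeasurable_id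
    rw [← e1, ← e2]
  have hidX := integral_identity π pb P ℙ hn' hPb hPe hπ0 hrs hpb X hXm hXpos hXint
  have hidZ := integral_identity π pb P ℙ hn' hPb hPe hπ0 hrs hpb Z hZm hZpos hZint
  have hcomp := integral_g_comparison π pb P ℙ hn' hPb hPe hπ0 hrs hpb X hXm hXpos
    U hUm hU Z hZq
  rw [hπdef, hpbdef] at hidX hidZ
  rw [hidX, hidZ]
  have hsums : ∑ i, ∫ ω, Z ω i ∂ℙ = ∑ i, ∫ ω, X ω i ∂ℙ :=
    Finset.sum_congr rfl fun i _ => hintZX i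
  rw [hsums]
  have : ∫ ω, gfun π P (Z ω) ∂ℙ ≤ ∫ ω, gfun π P (X ω) ∂ℙ := hcomp
  rw [hπdef] at this
  linarith
end
end

section
/- In the Eisenberg–Noe setting (α_x = α_L = 1) under the regularity assumption (p̄_i > 0 and Σ_{j=1}^n π_{ij} < 1 for every i ≤ n), let X : Ω → ℝⁿ₊ be an integrable random endowment vector, let U be uniformly distributed on [0,1] on the same probability space, and let Z be the comonotonic version of X given by Z_i = F_{X_i}^{-1}(U), where F_{X_i}^{-1}(u) = inf{t ∈ ℝ₊ : ℙ(X_i ≤ t) ≥ u}. Then for every bank i ≤ n: 𝔼[V_i(Z)] ≤ 𝔼[V_i(X)] and 𝔼[p_i(Z)] ≤ 𝔼[p_i(X)]. -/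
open Matrix BigOperators MeasureTheory

noncomputable section

section Aux
open Set Filter



lemma abs_min_sub_min (c a b : ℝ) : |min c a - min c b| ≤ |a - b| := by
  rcases le_total a b with h | h
  · rw [abs_of_nonpos (by simp [min_le_min le_rfl h, sub_nonpos]),
      abs_of_nonpos (sub_nonpos.2 h)]
    rcases le_total c a with h1 | h1 <;> rcases le_total c b with h2 | h2 <;>
      simp [min_eq_left, min_eq_right, h1, h2] <;> linarith
  · rw [abs_of_nonneg (by simp [min_le_min le_rfl h, sub_nonneg]),
      abs_of_nonneg (sub_nonneg.2 h)]
    rcases le_total c a with h1 | h1 <;> rcases le_total c b with h2 | h2 <;>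
      simp [min_eq_left, min_eq_right, h1, h2] <;> linarith

lemma sum_min_le {m : ℕ} (cs b : Fin m → ℝ) :
    (∑ j, min (cs j) (b j)) ≤ min (∑ j, cs j) (∑ j, b j) :=
  le_min (Finset.sum_le_sum fun j _ => min_le_left _ _)
    (Finset.sum_le_sum fun j _ => min_le_right _ _)



lemma sum_sSup_le {m : ℕ} (hm : 0 < m) (h : Fin m → ℝ → ℝ) (s : Set ℝ) (hs : s.Nonempty)
    (hdir : ∀ x ∈ s, ∀ y ∈ s, x ⊔ y ∈ s)
    (hmono : ∀ j, MonotoneOn (h j) s) (c : ℝ) (hle : ∀ u ∈ s, (∑ j, h j u) ≤ c) :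
    (∑ j, sSup (h j '' s)) ≤ c := by
  by_contra hc
  push_neg at hc
  have hmne : (0:ℝ) < m := by exact_mod_cast hm
  set ε := ((∑ j, sSup (h j '' s)) - c) / m with hε
  have hεpos : 0 < ε := div_pos (by linarith) hmne
  have hwit : ∀ j : Fin m, ∃ u ∈ s, sSup (h j '' s) - ε < h j u := by
    intro j
    obtain ⟨x, hx, hxlt⟩ := exists_lt_of_lt_csSup (hs.image _)
      (show sSup (h j '' s) - ε < sSup (h j '' s) by linarith)
    obtain ⟨u, hu, rfl⟩ := hx
    exact ⟨u, hu, hxlt⟩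
  choose w hw hwlt using hwit
  have hne : (Finset.univ : Finset (Fin m)).Nonempty := ⟨⟨0, hm⟩, Finset.mem_univ _⟩
  set u := Finset.univ.sup' hne w with hu
  have hus : u ∈ s := Finset.sup'_mem s hdir _ hne w (fun j _ => hw j)
  have hbig : (∑ j, (sSup (h j '' s) - ε)) < ∑ j, h j u := by
    refine Finset.sum_lt_sum_of_nonempty hne fun j _ => ?_
    exact lt_of_lt_of_le (hwlt j) ((hmono j) (hw j) hus (Finset.le_sup' w (Finset.mem_univ j)))
  have : (∑ j, (sSup (h j '' s) - ε)) = (∑ j, sSup (h j '' s)) - m * ε := by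
    rw [Finset.sum_sub_distrib]; simp [mul_comm]
  rw [this, hε] at hbig
  have : (m:ℝ) * (((∑ j, sSup (h j '' s)) - c) / m) = (∑ j, sSup (h j '' s)) - c := by
    field_simp
  rw [this] at hbig
  have := hle u hus
  linarith

lemma le_sum_sInf {m : ℕ} (hm : 0 < m) (h : Fin m → ℝ → ℝ) (s : Set ℝ) (hs : s.Nonempty)
    (hdir : ∀ x ∈ s, ∀ y ∈ s, x ⊓ y ∈ s)
    (hmono : ∀ j, MonotoneOn (h j) s) (c : ℝ) (hle : ∀ u ∈ s, c ≤ (∑ j, h j u))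
    (hbdd : ∀ j, BddBelow (h j '' s)) :
    c ≤ ∑ j, sInf (h j '' s) := by
  by_contra hc
  push_neg at hc
  have hmne : (0:ℝ) < m := by exact_mod_cast hm
  set ε := (c - (∑ j, sInf (h j '' s))) / m with hε
  have hεpos : 0 < ε := div_pos (by linarith) hmne
  have hwit : ∀ j : Fin m, ∃ u ∈ s, h j u < sInf (h j '' s) + ε := by
    intro j
    obtain ⟨x, hx, hxlt⟩ := (csInf_lt_iff (hbdd j) (hs.image _)).1
      (show sInf (h j '' s) < sInf (h j '' s) + ε by linarith)
    obtain ⟨u, hu, rfl⟩ := hx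
    exact ⟨u, hu, hxlt⟩
  choose w hw hwlt using hwit
  have hne : (Finset.univ : Finset (Fin m)).Nonempty := ⟨⟨0, hm⟩, Finset.mem_univ _⟩
  set u := Finset.univ.inf' hne w with hu
  have hus : u ∈ s := Finset.inf'_mem s hdir _ hne w (fun j _ => hw j)
  have hsmall : (∑ j, h j u) < ∑ j, (sInf (h j '' s) + ε) := by
    refine Finset.sum_lt_sum_of_nonempty hne fun j _ => ?_
    exact lt_of_le_of_lt ((hmono j) hus (hw j) (Finset.inf'_le w (Finset.mem_univ j))) (hwlt j)
  have : (∑ j, (sInf (h j '' s) + ε)) = (∑ j, sInf (h j '' s)) + m * ε := by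
    rw [Finset.sum_add_distrib]; simp [mul_comm]
  rw [this, hε] at hsmall
  have : (m:ℝ) * ((c - (∑ j, sInf (h j '' s))) / m) = c - (∑ j, sInf (h j '' s)) := by
    field_simp
  rw [this] at hsmall
  have := hle u hus
  linarith

lemma exists_split {m : ℕ} (hm : 0 < m) (h : Fin m → ℝ → ℝ)
    (hmono : ∀ j, MonotoneOn (h j) (Set.Ioo (0:ℝ) 1))
    (hpos : ∀ j, ∀ u ∈ Set.Ioo (0:ℝ) 1, 0 ≤ h j u) (c : ℝ) :
    ∃ (cs : Fin m → ℝ) (ust : ℝ), (∑ j, cs j) = c ∧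
      ∀ u ∈ Set.Ioo (0:ℝ) 1, u ≠ ust →
        min c (∑ j, h j u) ≤ ∑ j, min (cs j) (h j u) := by
  have hmne : (0:ℝ) < m := by exact_mod_cast hm
  have hIoo : (Set.Ioo (0:ℝ) 1).Nonempty := ⟨1/2, by norm_num, by norm_num⟩
  set V : Set ℝ := {u ∈ Set.Ioo (0:ℝ) 1 | (∑ j, h j u) ≤ c} with hV
  by_cases hVne : V.Nonempty
  · -- there is a point where the sum is below c
    obtain ⟨v0, hv0I, hv0c⟩ := id hVne
    have hbddV : BddAbove V := ⟨1, fun v hv => le_of_lt hv.1.2⟩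
    set ustar := sSup V with hustar
    have hv0le : v0 ≤ ustar := le_csSup hbddV (show v0 ∈ V from ⟨hv0I, hv0c⟩)
    have hustar0 : 0 < ustar := lt_of_lt_of_le hv0I.1 hv0le
    have hustar1 : ustar ≤ 1 := csSup_le hVne fun v hv => le_of_lt hv.1.2
    -- to the left of ustar the sum is ≤ c
    have hLsum : ∀ u ∈ Set.Ioo (0:ℝ) 1, u < ustar → (∑ j, h j u) ≤ c := by
      intro u huI hult
      obtain ⟨v, hvV, huv⟩ := exists_lt_of_lt_csSup hVne hult
      calc (∑ j, h j u) ≤ ∑ j, h j v :=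
            Finset.sum_le_sum fun j _ => (hmono j) huI hvV.1 huv.le
        _ ≤ c := hvV.2
    by_cases h1 : (1:ℝ) ≤ ustar
    · -- sum is ≤ c everywhere on (0,1)
      have hall : ∀ u ∈ Set.Ioo (0:ℝ) 1, (∑ j, h j u) ≤ c := fun u huI =>
        hLsum u huI (lt_of_lt_of_le huI.2 h1)
      set A : Fin m → ℝ := fun j => sSup (h j '' Set.Ioo (0:ℝ) 1) with hA
      have hAc : (∑ j, A j) ≤ c :=
        sum_sSup_le hm h _ hIoo (fun x hx y hy => by
          constructor
          · exact lt_sup_iff.2 (Or.inl hx.1)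
          · exact sup_lt_iff.2 ⟨hx.2, hy.2⟩) hmono c hall
      refine ⟨fun j => A j + (c - ∑ j, A j)/m, 2, ?_, ?_⟩
      · rw [Finset.sum_add_distrib]; simp; field_simp; ring
      · intro u huI _
        have hj : ∀ j, min (A j + (c - ∑ j, A j)/m) (h j u) = h j u := by
          intro j
          refine min_eq_right ?_
          have h1 : h j u ≤ A j := by
            refine le_csSup ?_ (Set.mem_image_of_mem _ huI)
            refine ⟨c, fun x hx => ?_⟩
            obtain ⟨v, hv, rfl⟩ := hx
            calc h j v ≤ ∑ j', h j' v :=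
                Finset.single_le_sum (fun j' _ => hpos j' v hv) (Finset.mem_univ j)
              _ ≤ c := hall v hv
          have h2 : 0 ≤ (c - ∑ j, A j)/m := div_nonneg (by linarith) hmne.le
          linarith
        simp only [hj]
        exact min_le_right _ _
    · push_neg at h1
      -- ustar < 1 : interpolate between left sup and right inf
      set Ls : Set ℝ := Set.Ioo 0 ustar with hLs
      set Rs : Set ℝ := Set.Ioo ustar 1 with hRs
      have hLsub : Ls ⊆ Set.Ioo (0:ℝ) 1 := fun u hu => ⟨hu.1, lt_trans hu.2 h1⟩
      have hRsub : Rs ⊆ Set.Ioo (0:ℝ) 1 := fun u hu => ⟨lt_trans hustar0 hu.1, hu.2⟩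
      have hLne : Ls.Nonempty := ⟨ustar/2, by positivity, by linarith⟩
      have hRne : Rs.Nonempty := ⟨(ustar+1)/2, by linarith, by linarith⟩
      have hRgt : ∀ u ∈ Rs, c < ∑ j, h j u := by
        intro u hu
        by_contra hle
        push_neg at hle
        have : u ∈ V := ⟨hRsub hu, hle⟩
        exact absurd (le_csSup hbddV this) (not_le.2 hu.1)
      set A : Fin m → ℝ := fun j => sSup (h j '' Ls) with hA
      set B : Fin m → ℝ := fun j => sInf (h j '' Rs) with hB
      have hmonoL : ∀ j, MonotoneOn (h j) Ls := fun j =>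
        (hmono j).mono hLsub
      have hmonoR : ∀ j, MonotoneOn (h j) Rs := fun j =>
        (hmono j).mono hRsub
      have hdirL : ∀ x ∈ Ls, ∀ y ∈ Ls, x ⊔ y ∈ Ls := fun x hx y hy =>
        ⟨lt_sup_iff.2 (Or.inl hx.1), sup_lt_iff.2 ⟨hx.2, hy.2⟩⟩
      have hdirR : ∀ x ∈ Rs, ∀ y ∈ Rs, x ⊓ y ∈ Rs := fun x hx y hy =>
        ⟨lt_inf_iff.2 ⟨hx.1, hy.1⟩, inf_lt_iff.2 (Or.inl hx.2)⟩
      have hAc : (∑ j, A j) ≤ c :=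
        sum_sSup_le hm h Ls hLne hdirL hmonoL c
          (fun u hu => hLsum u (hLsub hu) hu.2)
      have hcB : c ≤ ∑ j, B j :=
        le_sum_sInf hm h Rs hRne hdirR hmonoR c (fun u hu => (hRgt u hu).le)
          (fun j => ⟨0, fun x hx => by
            obtain ⟨v, hv, rfl⟩ := hx; exact hpos j v (hRsub hv)⟩)
      have hABj : ∀ j, A j ≤ B j := by
        intro j
        refine csSup_le (hLne.image _) fun x hx => ?_
        obtain ⟨l, hl, rfl⟩ := hx
        refine le_csInf (hRne.image _) fun y hy => ?_
        obtain ⟨r, hr, rfl⟩ := hy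
        exact (hmono j) (hLsub hl) (hRsub hr) (le_trans hl.2.le hr.1.le)
      set lam := (c - ∑ j, A j) / ((∑ j, B j) - (∑ j, A j)) with hlam
      set cs : Fin m → ℝ := fun j => A j + lam * (B j - A j) with hcs
      have hABsum : (∑ j, A j) ≤ ∑ j, B j := le_trans hAc hcB
      have hsumcs : (∑ j, cs j) = c := by
        rw [Finset.sum_add_distrib, ← Finset.mul_sum, Finset.sum_sub_distrib]
        rcases eq_or_lt_of_le hABsum with heq | hlt
        · rw [← heq, sub_self, mul_zero, add_zero]
          exact le_antisymm hAc (by rw [heq]; exact hcB)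
        · have hd : (∑ j, B j) - (∑ j, A j) ≠ 0 := ne_of_gt (by linarith)
          have h2 : lam * ((∑ j, B j) - (∑ j, A j)) = c - ∑ j, A j := by
            rw [hlam, div_mul_eq_mul_div, mul_div_assoc, div_self hd, mul_one]
          linarith
      have hlam0 : 0 ≤ lam := div_nonneg (by linarith) (by linarith)
      have hcsA : ∀ j, A j ≤ cs j := by
        intro j
        have : 0 ≤ lam * (B j - A j) := mul_nonneg hlam0 (by linarith [hABj j])
        simp [hcs]; linarith
      have hcsB : ∀ j, cs j ≤ B j := by
        intro j
        rcases eq_or_lt_of_le hABsum with heq | hlt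
        · have hall0 : ∀ j' ∈ Finset.univ, B j' - A j' = (0:ℝ) := by
            refine (Finset.sum_eq_zero_iff_of_nonneg fun j' _ => ?_).1 ?_
            · linarith [hABj j']
            · rw [Finset.sum_sub_distrib, ← heq]; ring
          have := hall0 j (Finset.mem_univ j)
          simp [hcs]
          nlinarith [hABj j]
        · have hlam1 : lam ≤ 1 := by
            rw [hlam, div_le_one (by linarith)]; linarith
          have : lam * (B j - A j) ≤ 1 * (B j - A j) :=
            mul_le_mul_of_nonneg_right hlam1 (by linarith [hABj j])
          simp [hcs]; linarith
      refine ⟨cs, ustar, hsumcs, ?_⟩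
      intro u huI hune
      rcases lt_or_gt_of_ne hune with hul | hur
      · -- u < ustar : mins are h j u
        have huL : u ∈ Ls := ⟨huI.1, hul⟩
        have hj : ∀ j, min (cs j) (h j u) = h j u := by
          intro j
          refine min_eq_right (le_trans ?_ (hcsA j))
          exact le_csSup ⟨c, fun x hx => by
            obtain ⟨v, hv, rfl⟩ := hx
            calc h j v ≤ ∑ j', h j' v :=
                Finset.single_le_sum (fun j' _ => hpos j' v (hLsub hv)) (Finset.mem_univ j)
              _ ≤ c := hLsum v (hLsub hv) hv.2⟩ (Set.mem_image_of_mem _ huL)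
        simp only [hj]
        exact min_le_right _ _
      · -- ustar < u : mins are cs j
        have huR : u ∈ Rs := ⟨hur, huI.2⟩
        have hj : ∀ j, min (cs j) (h j u) = cs j := by
          intro j
          refine min_eq_left (le_trans (hcsB j) ?_)
          exact csInf_le ⟨0, fun x hx => by
            obtain ⟨v, hv, rfl⟩ := hx; exact hpos j v (hRsub hv)⟩
            (Set.mem_image_of_mem _ huR)
        simp only [hj]
        rw [hsumcs]
        exact min_le_left _ _
  · -- V empty : the sum always exceeds c
    rw [Set.not_nonempty_iff_eq_empty] at hVne
    have hgt : ∀ u ∈ Set.Ioo (0:ℝ) 1, c < ∑ j, h j u := by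
      intro u hu
      by_contra hle
      push_neg at hle
      have hmem : u ∈ V := ⟨hu, hle⟩
      rw [hVne] at hmem
      simpa using hmem
    set B : Fin m → ℝ := fun j => sInf (h j '' Set.Ioo (0:ℝ) 1) with hB
    have hcB : c ≤ ∑ j, B j :=
      le_sum_sInf hm h _ hIoo (fun x hx y hy =>
        ⟨lt_inf_iff.2 ⟨hx.1, hy.1⟩, inf_lt_iff.2 (Or.inl hx.2)⟩) hmono c
        (fun u hu => (hgt u hu).le)
        (fun j => ⟨0, fun x hx => by
          obtain ⟨v, hv, rfl⟩ := hx; exact hpos j v hv⟩)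
    refine ⟨fun j => B j - ((∑ j, B j) - c)/m, 2, ?_, ?_⟩
    · rw [Finset.sum_sub_distrib]; simp; field_simp; ring
    · intro u huI _
      have hj : ∀ j, min (B j - ((∑ j, B j) - c)/m) (h j u) = B j - ((∑ j, B j) - c)/m := by
        intro j
        refine min_eq_left ?_
        have h1 : B j ≤ h j u := csInf_le ⟨0, fun x hx => by
          obtain ⟨v, hv, rfl⟩ := hx; exact hpos j v hv⟩ (Set.mem_image_of_mem _ huI)
        have h2 : 0 ≤ ((∑ j, B j) - c)/m := div_nonneg (by linarith) hmne.le
        linarith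
      simp only [hj]
      rw [Finset.sum_sub_distrib]
      have : (∑ _j : Fin m, ((∑ j, B j) - c)/m) = (∑ j, B j) - c := by
        simp; field_simp
      rw [this]
      have : (∑ j, B j) - ((∑ j, B j) - c) = c := by ring
      rw [this]
      exact min_le_left _ _



variable {Ω : Type} [MeasurableSpace Ω]

lemma integrable_min_of_ae_nonneg (ℙ : Measure Ω) [IsProbabilityMeasure ℙ] {f : Ω → ℝ}
    (hf : Measurable f) (hpos : ∀ᵐ ω ∂ℙ, 0 ≤ f ω) (c : ℝ) :
    Integrable (fun ω => min c (f ω)) ℙ := by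
  refine Integrable.mono' (integrable_const |c|) (Measurable.aestronglyMeasurable (measurable_const.min hf)) ?_
  filter_upwards [hpos] with ω hω
  rw [Real.norm_eq_abs, abs_le]
  constructor
  · have : min c 0 ≤ min c (f ω) := min_le_min le_rfl hω
    have : -|c| ≤ min c 0 := by rcases le_total c 0 with h | h <;> simp [min_eq_left, min_eq_right, h, abs_of_nonpos, abs_of_nonneg] <;> linarith
    linarith [min_le_min (le_refl c) hω]
  · exact le_trans (min_le_left _ _) (le_abs_self c)

lemma map_U_apply (ℙ : Measure Ω) {U : Ω → ℝ} (hUm : Measurable U)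
    (hU : ℙ.map U = volume.restrict (Set.Icc (0:ℝ) 1)) (s : Set ℝ) (hs : MeasurableSet s) :
    ℙ (U ⁻¹' s) = volume (s ∩ Set.Icc 0 1) := by
  rw [← Measure.map_apply hUm hs, hU, Measure.restrict_apply hs]

lemma ae_U_Ioo (ℙ : Measure Ω) [IsProbabilityMeasure ℙ] {U : Ω → ℝ} (hUm : Measurable U)
    (hU : ℙ.map U = volume.restrict (Set.Icc (0:ℝ) 1)) :
    ∀ᵐ ω ∂ℙ, U ω ∈ Set.Ioo (0:ℝ) 1 := by
  rw [ae_iff]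
  have : {ω | ¬ U ω ∈ Set.Ioo (0:ℝ) 1} = U ⁻¹' (Set.Ioo (0:ℝ) 1)ᶜ := rfl
  rw [this, map_U_apply ℙ hUm hU _ measurableSet_Ioo.compl]
  have hsub : (Set.Ioo (0:ℝ) 1)ᶜ ∩ Set.Icc 0 1 ⊆ {(0:ℝ)} ∪ {1} := by
    intro x ⟨hx1, hx2⟩
    simp only [Set.mem_compl_iff, Set.mem_Ioo, not_and_or, not_lt] at hx1
    rcases hx1 with h | h
    · exact Or.inl (by simp [le_antisymm h hx2.1])
    · exact Or.inr (by simp [le_antisymm hx2.2 h])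
  refine le_antisymm (le_trans (measure_mono hsub) ?_) (zero_le)
  refine le_trans (measure_union_le _ _) ?_
  simp

lemma ae_U_ne (ℙ : Measure Ω) [IsProbabilityMeasure ℙ] {U : Ω → ℝ} (hUm : Measurable U)
    (hU : ℙ.map U = volume.restrict (Set.Icc (0:ℝ) 1)) (a : ℝ) :
    ∀ᵐ ω ∂ℙ, U ω ≠ a := by
  rw [ae_iff]
  have : {ω | ¬ U ω ≠ a} = U ⁻¹' {a} := by ext ω; simp
  rw [this, map_U_apply ℙ hUm hU _ (measurableSet_singleton a)]
  refine le_antisymm (le_trans (measure_mono Set.inter_subset_left) ?_) (zero_le)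
  simp

lemma step_int (ℙ : Measure Ω) [IsProbabilityMeasure ℙ]
    (U : Ω → ℝ) (hUm : Measurable U) (hU : ℙ.map U = volume.restrict (Set.Icc (0:ℝ) 1))
    {m : ℕ} (hm : 0 < m) (h : Fin m → ℝ → ℝ)
    (hmono : ∀ j, MonotoneOn (h j) (Set.Ioo 0 1))
    (hposh : ∀ j, ∀ u ∈ Set.Ioo (0:ℝ) 1, 0 ≤ h j u)
    (hhm : ∀ j, Measurable fun ω => h j (U ω))
    (T : Fin m → Ω → ℝ) (hTm : ∀ j, Measurable (T j)) (hTpos : ∀ j ω, 0 ≤ T j ω)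
    (hmarg : ∀ j (c : ℝ), (∫ ω, min c (h j (U ω)) ∂ℙ) ≤ ∫ ω, min c (T j ω) ∂ℙ)
    (c : ℝ) :
    (∫ ω, min c (∑ j, h j (U ω)) ∂ℙ) ≤ ∫ ω, min c (∑ j, T j ω) ∂ℙ := by
  obtain ⟨cs, ust, hsum, hineq⟩ := exists_split hm h hmono hposh c
  have haeIoo := ae_U_Ioo ℙ hUm hU
  have haene := ae_U_ne ℙ hUm hU ust
  have hsummeas : Measurable fun ω => ∑ j, h j (U ω) :=
    Finset.measurable_sum _ fun j _ => hhm j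
  have hsumpos : ∀ᵐ ω ∂ℙ, 0 ≤ ∑ j, h j (U ω) := by
    filter_upwards [haeIoo] with ω hω
    exact Finset.sum_nonneg fun j _ => hposh j _ hω
  have I1 : Integrable (fun ω => min c (∑ j, h j (U ω))) ℙ :=
    integrable_min_of_ae_nonneg ℙ hsummeas hsumpos c
  have Ih : ∀ j (c' : ℝ), Integrable (fun ω => min c' (h j (U ω))) ℙ := fun j c' =>
    integrable_min_of_ae_nonneg ℙ (hhm j) (by
      filter_upwards [haeIoo] with ω hω; exact hposh j _ hω) c'
  have IT : ∀ j (c' : ℝ), Integrable (fun ω => min c' (T j ω)) ℙ := fun j c' =>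
    integrable_min_of_ae_nonneg ℙ (hTm j) (Filter.Eventually.of_forall fun ω => hTpos j ω) c'
  have ITsum : Integrable (fun ω => min c (∑ j, T j ω)) ℙ :=
    integrable_min_of_ae_nonneg ℙ (Finset.measurable_sum _ fun j _ => hTm j)
      (Filter.Eventually.of_forall fun ω => Finset.sum_nonneg fun j _ => hTpos j ω) c
  calc (∫ ω, min c (∑ j, h j (U ω)) ∂ℙ)
      ≤ ∫ ω, ∑ j, min (cs j) (h j (U ω)) ∂ℙ := by
        refine integral_mono_ae I1 (integrable_finset_sum _ fun j _ => Ih j (cs j)) ?_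
        filter_upwards [haeIoo, haene] with ω h1 h2
        exact hineq (U ω) h1 h2
    _ = ∑ j, ∫ ω, min (cs j) (h j (U ω)) ∂ℙ :=
        integral_finset_sum _ fun j _ => Ih j (cs j)
    _ ≤ ∑ j, ∫ ω, min (cs j) (T j ω) ∂ℙ :=
        Finset.sum_le_sum fun j _ => hmarg j (cs j)
    _ = ∫ ω, ∑ j, min (cs j) (T j ω) ∂ℙ :=
        (integral_finset_sum _ fun j _ => IT j (cs j)).symm
    _ ≤ ∫ ω, min c (∑ j, T j ω) ∂ℙ := by
        refine integral_mono_ae (integrable_finset_sum _ fun j _ => IT j (cs j)) ITsum ?_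
        refine Filter.Eventually.of_forall fun ω => ?_
        calc (∑ j, min (cs j) (T j ω)) ≤ min (∑ j, cs j) (∑ j, T j ω) :=
              sum_min_le _ _
          _ = min c (∑ j, T j ω) := by rw [hsum]




variable {Ω : Type} [MeasurableSpace Ω] (ℙ : Measure Ω) [IsProbabilityMeasure ℙ]
  (Y : Ω → ℝ)

lemma cdf_mono {s t : ℝ} (hst : s ≤ t) :
    (ℙ {ω | Y ω ≤ s}).toReal ≤ (ℙ {ω | Y ω ≤ t}).toReal :=
  ENNReal.toReal_mono (measure_ne_top _ _) (measure_mono fun ω h => le_trans h hst)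

lemma cdf_exists {u : ℝ} (hu : u < 1) :
    ∃ t : ℝ, 0 ≤ t ∧ u ≤ (ℙ {ω | Y ω ≤ t}).toReal := by
  rcases le_or_gt u 0 with hu0 | hu0
  · exact ⟨0, le_rfl, le_trans hu0 ENNReal.toReal_nonneg⟩
  have hmono : Monotone (fun m : ℕ => {ω | Y ω ≤ (m:ℝ)}) := by
    intro a b hab ω h
    simp only [Set.mem_setOf_eq] at h ⊢
    exact le_trans h (by exact_mod_cast hab)
  have hUnion : (⋃ m : ℕ, {ω | Y ω ≤ (m:ℝ)}) = Set.univ := by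
    ext ω
    simp only [Set.mem_iUnion, Set.mem_univ, iff_true, Set.mem_setOf_eq]
    exact exists_nat_ge (Y ω)
  have htend := tendsto_measure_iUnion_atTop (μ := ℙ) hmono
  rw [hUnion, measure_univ] at htend
  have hlt : ENNReal.ofReal u < 1 := ENNReal.ofReal_lt_one.2 hu
  obtain ⟨m, hm⟩ := (htend.eventually_const_lt hlt).exists
  refine ⟨m, Nat.cast_nonneg m, ?_⟩
  exact (ENNReal.ofReal_le_iff_le_toReal (measure_ne_top _ _)).1 hm.le

lemma cdf_rc (hYm : Measurable Y) {u t : ℝ}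
    (hall : ∀ s, t < s → u ≤ (ℙ {ω | Y ω ≤ s}).toReal) :
    u ≤ (ℙ {ω | Y ω ≤ t}).toReal := by
  set sq : ℕ → Set Ω := fun m => {ω | Y ω ≤ t + 1/(m+1)} with hsq
  have hmeas : ∀ m, NullMeasurableSet (sq m) ℙ := fun m =>
    (hYm measurableSet_Iic).nullMeasurableSet
  have hanti : Antitone sq := by
    intro a b hab ω h
    refine le_trans h (add_le_add (le_refl t) ?_)
    apply one_div_le_one_div_of_le
    · positivity
    · exact_mod_cast add_le_add_left (Nat.cast_le.2 hab) 1
  have hInter : (⋂ m, sq m) = {ω | Y ω ≤ t} := by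
    ext ω
    simp only [Set.mem_iInter, Set.mem_setOf_eq, hsq]
    constructor
    · intro h
      by_contra hgt
      push_neg at hgt
      obtain ⟨m, hm⟩ := exists_nat_one_div_lt (sub_pos.2 hgt)
      have h2 : Y ω ≤ t + 1/(m+1) := h m
      linarith
    · intro h m
      have : (0:ℝ) < 1/(m+1) := by positivity
      linarith
  have htend := tendsto_measure_iInter_atTop (μ := ℙ) hmeas hanti ⟨0, measure_ne_top _ _⟩
  rw [hInter] at htend
  have heach : ∀ m : ℕ, ENNReal.ofReal u ≤ ℙ (sq m) := by
    intro m
    refine (ENNReal.ofReal_le_iff_le_toReal (measure_ne_top _ _)).2 ?_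
    exact hall (t + 1/(m+1)) (by simp; positivity)
  have hle : ENNReal.ofReal u ≤ ℙ {ω | Y ω ≤ t} := ge_of_tendsto' htend ?_
  · exact (ENNReal.ofReal_le_iff_le_toReal (measure_ne_top _ _)).1 hle
  · exact fun m => heach m

lemma quant_le_iff (hYm : Measurable Y) {u t : ℝ} (hu1 : u < 1) (ht : 0 ≤ t) :
    sInf {s : ℝ | 0 ≤ s ∧ u ≤ (ℙ {ω | Y ω ≤ s}).toReal} ≤ t
      ↔ u ≤ (ℙ {ω | Y ω ≤ t}).toReal := by
  constructor
  · intro h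
    refine cdf_rc ℙ Y hYm fun s hs => ?_
    obtain ⟨t0, ht0, hut0⟩ := cdf_exists ℙ Y hu1
    have hne : {s : ℝ | 0 ≤ s ∧ u ≤ (ℙ {ω | Y ω ≤ s}).toReal}.Nonempty := ⟨t0, ht0, hut0⟩
    obtain ⟨x, hx, hxs⟩ := (csInf_lt_iff ⟨0, fun y hy => hy.1⟩ hne).1 (lt_of_le_of_lt h hs)
    exact le_trans hx.2 (cdf_mono ℙ Y hxs.le)
  · intro h
    exact csInf_le ⟨0, fun y hy => hy.1⟩ ⟨ht, h⟩

lemma quant_monoOn (hYm : Measurable Y) :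
    MonotoneOn (fun u => sInf {s : ℝ | 0 ≤ s ∧ u ≤ (ℙ {ω | Y ω ≤ s}).toReal})
      (Set.Ioo (0:ℝ) 1) := by
  intro u hu v hv huv
  refine csInf_le_csInf ⟨0, fun y hy => hy.1⟩ ?_ ?_
  · obtain ⟨t0, ht0, hvt0⟩ := cdf_exists ℙ Y hv.2
    exact ⟨t0, ht0, hvt0⟩
  · intro s hs
    exact ⟨hs.1, le_trans huv hs.2⟩

lemma quant_nonneg (u : ℝ) :
    0 ≤ sInf {s : ℝ | 0 ≤ s ∧ u ≤ (ℙ {ω | Y ω ≤ s}).toReal} :=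
  Real.sInf_nonneg fun s hs => hs.1



lemma measurable_clip {f : ℝ → ℝ} (hf : MonotoneOn f (Set.Ioo 0 1)) :
    Measurable (fun u => if u ∈ Set.Ioo (0:ℝ) 1 then f u else 0) := by
  apply measurable_of_Iic
  intro a
  have hset : (fun u => if u ∈ Set.Ioo (0:ℝ) 1 then f u else 0) ⁻¹' Set.Iic a
      = {u | u ∈ Set.Ioo (0:ℝ) 1 ∧ f u ≤ a}
        ∪ (if (0:ℝ) ≤ a then (Set.Ioo (0:ℝ) 1)ᶜ else ∅) := by
    ext u
    simp only [Set.mem_preimage, Set.mem_Iic, Set.mem_union, Set.mem_setOf_eq]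
    by_cases hu : u ∈ Set.Ioo (0:ℝ) 1
    · by_cases ha : (0:ℝ) ≤ a <;> simp [hu, ha]
    · by_cases ha : (0:ℝ) ≤ a <;> simp [hu, ha]
  rw [hset]
  refine MeasurableSet.union ?_ ?_
  · refine Set.OrdConnected.measurableSet ⟨fun x hx y hy z hz => ?_⟩
    have hzI : z ∈ Set.Ioo (0:ℝ) 1 :=
      ⟨lt_of_lt_of_le hx.1.1 hz.1, lt_of_le_of_lt hz.2 hy.1.2⟩
    exact ⟨hzI, le_trans (hf hzI hy.1 hz.2) hy.2⟩
  · split_ifs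
    · exact measurableSet_Ioo.compl
    · exact MeasurableSet.empty

variable {Ω : Type} [MeasurableSpace Ω] (ℙ : Measure Ω) [IsProbabilityMeasure ℙ]

lemma map_U_apply' {U : Ω → ℝ} (hUm : Measurable U)
    (hU : ℙ.map U = volume.restrict (Set.Icc (0:ℝ) 1)) (s : Set ℝ) (hs : MeasurableSet s) :
    ℙ (U ⁻¹' s) = volume (s ∩ Set.Icc 0 1) := by
  rw [← Measure.map_apply hUm hs, hU, Measure.restrict_apply hs]

/-- The clipped quantile transform has the law of `Y`. -/
lemma map_clip_quant (U : Ω → ℝ) (hUm : Measurable U)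
    (hU : ℙ.map U = volume.restrict (Set.Icc (0:ℝ) 1))
    (Y : Ω → ℝ) (hYm : Measurable Y) (hYpos : ∀ ω, 0 ≤ Y ω) :
    Measure.map (fun ω => if U ω ∈ Set.Ioo (0:ℝ) 1
        then sInf {s : ℝ | 0 ≤ s ∧ U ω ≤ (ℙ {ω' | Y ω' ≤ s}).toReal} else 0) ℙ
      = Measure.map Y ℙ := by
  set G : ℝ → ℝ := fun u => sInf {s : ℝ | 0 ≤ s ∧ u ≤ (ℙ {ω' | Y ω' ≤ s}).toReal} with hG
  set cl : ℝ → ℝ := fun u => if u ∈ Set.Ioo (0:ℝ) 1 then G u else 0 with hcl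
  have hclm : Measurable cl := measurable_clip (quant_monoOn ℙ Y hYm)
  have hWm : Measurable fun ω => cl (U ω) := hclm.comp hUm
  haveI : IsProbabilityMeasure (Measure.map (fun ω => cl (U ω)) ℙ) :=
    Measure.isProbabilityMeasure_map hWm.aemeasurable
  haveI : IsProbabilityMeasure (Measure.map Y ℙ) :=
    Measure.isProbabilityMeasure_map hYm.aemeasurable
  refine Measure.ext_of_Iic _ _ fun t => ?_
  rw [Measure.map_apply hWm measurableSet_Iic, Measure.map_apply hYm measurableSet_Iic]
  rcases lt_or_ge t 0 with ht | ht
  · have h1 : (fun ω => cl (U ω)) ⁻¹' Set.Iic t = ∅ := by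
      ext ω
      simp only [Set.mem_preimage, Set.mem_Iic, Set.mem_empty_iff_false, iff_false, not_le, hcl]
      split_ifs with h
      · exact lt_of_lt_of_le ht (quant_nonneg ℙ Y _)
      · exact ht
    have h2 : Y ⁻¹' Set.Iic t = ∅ := by
      ext ω
      simp only [Set.mem_preimage, Set.mem_Iic, Set.mem_empty_iff_false, iff_false, not_le]
      exact lt_of_lt_of_le ht (hYpos ω)
    rw [h1, h2]
  · -- t ≥ 0
    set F : ℝ := (ℙ {ω' | Y ω' ≤ t}).toReal with hF
    have hF0 : 0 ≤ F := ENNReal.toReal_nonneg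
    have hF1 : F ≤ 1 := by
      rw [hF]
      exact ENNReal.toReal_le_of_le_ofReal zero_le_one (by simpa using prob_le_one)
    have hae : ℙ ((fun ω => cl (U ω)) ⁻¹' Set.Iic t)
        = ℙ (U ⁻¹' (Set.Ioo (0:ℝ) 1 ∩ Set.Iic F)) := by
      apply measure_congr
      have haeIoo : ∀ᵐ ω ∂ℙ, U ω ∈ Set.Ioo (0:ℝ) 1 := ae_U_Ioo ℙ hUm hU
      filter_upwards [haeIoo] with ω hω
      have hiff : cl (U ω) ≤ t ↔ U ω ≤ F := by
        rw [hcl]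
        simp only [hω, if_true]
        exact quant_le_iff ℙ Y hYm hω.2 ht
      show (ω ∈ (fun ω => cl (U ω)) ⁻¹' Set.Iic t)
          = (ω ∈ U ⁻¹' (Set.Ioo (0:ℝ) 1 ∩ Set.Iic F))
      simp only [Set.mem_preimage, Set.mem_Iic, Set.mem_inter_iff, Set.mem_Ioo, eq_iff_iff]
      exact ⟨fun h => ⟨⟨hω.1, hω.2⟩, hiff.1 h⟩, fun h => hiff.2 h.2⟩
    rw [hae, map_U_apply' ℙ hUm hU _ (measurableSet_Ioo.inter measurableSet_Iic)]
    have hIset : (Set.Ioo (0:ℝ) 1 ∩ Set.Iic F) ∩ Set.Icc 0 1 = Set.Ioo (0:ℝ) 1 ∩ Set.Iic F := by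
      rw [Set.inter_eq_left]
      exact fun x hx => ⟨hx.1.1.le, hx.1.2.le⟩
    rw [hIset]
    have hvol : volume (Set.Ioo (0:ℝ) 1 ∩ Set.Iic F) = ENNReal.ofReal F := by
      rcases lt_or_ge F 1 with hF1' | hF1'
      · have : Set.Ioo (0:ℝ) 1 ∩ Set.Iic F = Set.Ioc 0 F := by
          ext x
          simp only [Set.mem_inter_iff, Set.mem_Ioo, Set.mem_Iic, Set.mem_Ioc]
          constructor
          · rintro ⟨⟨h1, _⟩, h3⟩; exact ⟨h1, h3⟩
          · rintro ⟨h1, h2⟩; exact ⟨⟨h1, lt_of_le_of_lt h2 hF1'⟩, h2⟩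
        rw [this, Real.volume_Ioc, sub_zero]
      · have hFeq : F = 1 := le_antisymm hF1 hF1'
        have : Set.Ioo (0:ℝ) 1 ∩ Set.Iic F = Set.Ioo 0 1 := by
          rw [Set.inter_eq_left]
          intro x hx
          rw [Set.mem_Iic, hFeq]
          exact hx.2.le
        rw [this, Real.volume_Ioo, sub_zero, hFeq]
    rw [hvol, hF]
    rw [ENNReal.ofReal_toReal (measure_ne_top _ _)]
    rfl


section transfer
variable {Ω : Type} [MeasurableSpace Ω] {ℙ : Measure Ω} [IsProbabilityMeasure ℙ]

lemma integral_comp_eq_of_map_eq {A B : Ω → ℝ}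
    (hA : Measurable A) (hB : Measurable B) (hmap : Measure.map A ℙ = Measure.map B ℙ)
    (φ : ℝ → ℝ) (hφ : Measurable φ) : ∫ ω, φ (A ω) ∂ℙ = ∫ ω, φ (B ω) ∂ℙ := by
  rw [← integral_map hA.aemeasurable hφ.aestronglyMeasurable, hmap,
    integral_map hB.aemeasurable hφ.aestronglyMeasurable]

lemma integrable_comp_of_map_eq {A B : Ω → ℝ}
    (hA : Measurable A) (hB : Measurable B) (hmap : Measure.map A ℙ = Measure.map B ℙ)
    (hint : Integrable B ℙ) : Integrable A ℙ := by
  have h1 : Integrable id (Measure.map A ℙ) := by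
    rw [hmap]
    exact (integrable_map_measure aestronglyMeasurable_id hB.aemeasurable).2 hint
  exact (integrable_map_measure aestronglyMeasurable_id hA.aemeasurable).1 h1

end transfer
def iterP {n : ℕ} (L : Matrix (Fin n) (Fin (n + 1)) ℝ) : ℕ → (Fin n → ℝ) → Fin n → ℝ
  | 0, _, i => pbar L i
  | (k+1), x, i => min (pbar L i) (x i + ∑ j, relLiab L j i * iterP L k x j)

section iterfacts
variable {n : ℕ} {L : Matrix (Fin n) (Fin (n + 1)) ℝ}

lemma relLiab_nonneg (hL : ∀ i j, 0 ≤ L i j) (i j : Fin n) : 0 ≤ relLiab L i j := by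
  unfold relLiab
  split_ifs with h
  · exact div_nonneg (hL i j.castSucc) h.le
  · exact le_rfl

lemma pbar_nonneg (hL : ∀ i j, 0 ≤ L i j) (i : Fin n) : 0 ≤ pbar L i :=
  Finset.sum_nonneg fun j _ => hL i j

lemma iterP_nonneg (hL : ∀ i j, 0 ≤ L i j) {x : Fin n → ℝ} (hx : ∀ i, 0 ≤ x i) :
    ∀ k i, 0 ≤ iterP L k x i := by
  intro k
  induction k with
  | zero => intro i; simpa [iterP] using pbar_nonneg hL i
  | succ k IH =>
    intro i
    simp only [iterP]
    exact le_min (pbar_nonneg hL i) (add_nonneg (hx i) (Finset.sum_nonneg fun j _ =>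
      mul_nonneg (relLiab_nonneg hL j i) (IH j)))

lemma iterP_le_pbar {x : Fin n → ℝ} : ∀ k i, iterP L k x i ≤ pbar L i := by
  intro k i
  cases k with
  | zero => simp [iterP]
  | succ k => simp only [iterP]; exact min_le_left _ _

lemma iterP_mono (hL : ∀ i j, 0 ≤ L i j) {x y : Fin n → ℝ} (hxy : ∀ i, x i ≤ y i) :
    ∀ k i, iterP L k x i ≤ iterP L k y i := by
  intro k
  induction k with
  | zero => intro i; simp [iterP]
  | succ k IH =>
    intro i
    simp only [iterP]
    refine min_le_min le_rfl (add_le_add (hxy i) (Finset.sum_le_sum fun j _ =>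
      mul_le_mul_of_nonneg_left (IH j) (relLiab_nonneg hL j i)))

lemma iterP_measurable : ∀ (k : ℕ) (i : Fin n), Measurable fun x : Fin n → ℝ => iterP L k x i := by
  intro k
  induction k with
  | zero => intro i; simp only [iterP]; exact measurable_const
  | succ k IH =>
    intro i
    simp only [iterP]
    exact measurable_const.min ((measurable_pi_apply i).add
      (Finset.measurable_sum _ fun j _ => (IH j).const_mul _))

lemma abs_min_sub_min' (c a b : ℝ) : |min c a - min c b| ≤ |a - b| := by
  rcases le_total a b with h | h
  · rw [abs_of_nonpos (by simp [min_le_min le_rfl h, sub_nonpos]),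
      abs_of_nonpos (sub_nonpos.2 h)]
    rcases le_total c a with h1 | h1 <;> rcases le_total c b with h2 | h2 <;>
      simp [min_eq_left, min_eq_right, h1, h2] <;> linarith
  · rw [abs_of_nonneg (by simp [min_le_min le_rfl h, sub_nonneg]),
      abs_of_nonneg (sub_nonneg.2 h)]
    rcases le_total c a with h1 | h1 <;> rcases le_total c b with h2 | h2 <;>
      simp [min_eq_left, min_eq_right, h1, h2] <;> linarith

lemma iterP_approx (hL : ∀ i j, 0 ≤ L i j) {x p : Fin n → ℝ} {κ : ℝ}
    (hfix : ∀ i, p i = min (pbar L i) (x i + ∑ j, relLiab L j i * p j))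
    (hb : ∀ i, 0 ≤ p i ∧ p i ≤ pbar L i)
    (hκ : ∀ j, (∑ i, relLiab L j i) ≤ κ) (hκ0 : 0 ≤ κ) :
    ∀ k, (∑ i, |iterP L k x i - p i|) ≤ κ^k * ∑ i, pbar L i := by
  intro k
  induction k with
  | zero =>
    simp only [iterP, pow_zero, one_mul]
    refine Finset.sum_le_sum fun i _ => ?_
    rw [abs_of_nonneg (by linarith [(hb i).1, (hb i).2])]
    linarith [(hb i).1]
  | succ k IH =>
    have hstep : ∀ i, |iterP L (k+1) x i - p i| ≤
        ∑ j, relLiab L j i * |iterP L k x j - p j| := by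
      intro i
      calc |iterP L (k+1) x i - p i|
          = |min (pbar L i) (x i + ∑ j, relLiab L j i * iterP L k x j)
              - min (pbar L i) (x i + ∑ j, relLiab L j i * p j)| := by
            rw [hfix i]; rfl
        _ ≤ |(x i + ∑ j, relLiab L j i * iterP L k x j)
              - (x i + ∑ j, relLiab L j i * p j)| := abs_min_sub_min' _ _ _
        _ = |∑ j, relLiab L j i * (iterP L k x j - p j)| := by
            congr 1
            simp only [mul_sub, Finset.sum_sub_distrib]
            ring
        _ ≤ ∑ j, |relLiab L j i * (iterP L k x j - p j)| :=
            Finset.abs_sum_le_sum_abs _ _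
        _ = ∑ j, relLiab L j i * |iterP L k x j - p j| := by
            refine Finset.sum_congr rfl fun j _ => ?_
            rw [abs_mul, abs_of_nonneg (relLiab_nonneg hL j i)]
    calc (∑ i, |iterP L (k+1) x i - p i|)
        ≤ ∑ i, ∑ j, relLiab L j i * |iterP L k x j - p j| :=
          Finset.sum_le_sum fun i _ => hstep i
      _ = ∑ j, (∑ i, relLiab L j i) * |iterP L k x j - p j| := by
          rw [Finset.sum_comm]
          exact Finset.sum_congr rfl fun j _ => by rw [Finset.sum_mul]
      _ ≤ ∑ j, κ * |iterP L k x j - p j| :=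
          Finset.sum_le_sum fun j _ =>
            mul_le_mul_of_nonneg_right (hκ j) (abs_nonneg _)
      _ = κ * ∑ j, |iterP L k x j - p j| := by rw [Finset.mul_sum]
      _ ≤ κ * (κ^k * ∑ i, pbar L i) := mul_le_mul_of_nonneg_left IH hκ0
      _ = κ^(k+1) * ∑ i, pbar L i := by ring

end iterfacts

end Aux

/-- In the Eisenberg–Noe setting under the regularity assumption, for an integrable random
endowment vector `X` and its comonotonic version `Z_i = F_{X_i}^{-1}(U)` (with `U` uniform on
`[0,1]`), for every bank `i`: `𝔼[V_i(Z)] ≤ 𝔼[V_i(X)]` and `𝔼[p_i(Z)] ≤ 𝔼[p_i(X)]`. -/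
theorem comonotonic_lower_bound (n : ℕ) (hn : 1 ≤ n)
    (L : Matrix (Fin n) (Fin (n + 1)) ℝ)
    (hL : ∀ i j, 0 ≤ L i j) (hLdiag : ∀ i : Fin n, L i i.castSucc = 0)
    (hreg : ∀ i, 0 < pbar L i ∧ ∑ j, relLiab L i j < 1)
    (P : (Fin n → ℝ) → (Fin n → ℝ))
    (hP : ∀ x : Fin n → ℝ, (∀ i, 0 ≤ x i) → IsGreatestClearingPayment L x (P x))
    (Ω : Type) (mΩ : MeasurableSpace Ω) (ℙ : Measure Ω) (hprob : IsProbabilityMeasure ℙ)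
    (X : Ω → Fin n → ℝ) (hXm : Measurable X) (hXpos : ∀ ω i, 0 ≤ X ω i)
    (hXint : ∀ i, Integrable (fun ω => X ω i) ℙ)
    (U : Ω → ℝ) (hUm : Measurable U)
    (hU : ℙ.map U = volume.restrict (Set.Icc (0 : ℝ) 1))
    (Z : Ω → Fin n → ℝ)
    (hZ : ∀ ω i, Z ω i = sInf {t : ℝ | 0 ≤ t ∧ U ω ≤ (ℙ {ω' | X ω' i ≤ t}).toReal}) :
    ∀ i : Fin n,
      (∫ ω, (Z ω i + (∑ j, relLiab L j i * P (Z ω) j) - pbar L i) ∂ℙ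
        ≤ ∫ ω, (X ω i + (∑ j, relLiab L j i * P (X ω) j) - pbar L i) ∂ℙ)
      ∧ (∫ ω, P (Z ω) i ∂ℙ ≤ ∫ ω, P (X ω) i ∂ℙ) := by
  classical
  haveI : Nonempty (Fin n) := ⟨⟨0, hn⟩⟩
  -- network constants
  have hpi0 : ∀ i j, 0 ≤ relLiab L i j := relLiab_nonneg hL
  set κ : ℝ := Finset.univ.sup' Finset.univ_nonempty (fun j => ∑ i, relLiab L j i) with hκdef
  have hκj : ∀ j, (∑ i, relLiab L j i) ≤ κ := by
    intro j
    rw [hκdef]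
    exact Finset.le_sup' (fun j => ∑ i, relLiab L j i) (Finset.mem_univ j)
  have hκlt : κ < 1 := by
    rw [hκdef, Finset.sup'_lt_iff]
    exact fun j _ => (hreg j).2
  have hκ0 : 0 ≤ κ :=
    le_trans (Finset.sum_nonneg fun i _ => hpi0 _ i) (hκj (Classical.arbitrary (Fin n)))
  set C : ℝ := ∑ i, pbar L i with hCdef
  -- quantile setup
  set G : Fin n → ℝ → ℝ :=
    fun i u => sInf {t : ℝ | 0 ≤ t ∧ u ≤ (ℙ {ω' | X ω' i ≤ t}).toReal} with hGdef
  set q : Fin n → ℝ → ℝ := fun i u => if u ∈ Set.Ioo (0:ℝ) 1 then G i u else 0 with hqdef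
  set W : Ω → Fin n → ℝ := fun ω i => q i (U ω) with hWdef
  have hXim : ∀ i, Measurable fun ω => X ω i := fun i => (measurable_pi_apply i).comp hXm
  have hGmono : ∀ i, MonotoneOn (G i) (Set.Ioo 0 1) := fun i =>
    quant_monoOn ℙ (fun ω => X ω i) (hXim i)
  have hqm : ∀ i, Measurable (q i) := fun i => measurable_clip (hGmono i)
  have hWim : ∀ i, Measurable fun ω => W ω i := fun i => (hqm i).comp hUm
  have hWm : Measurable W := measurable_pi_lambda _ hWim
  have hqpos : ∀ i u, 0 ≤ q i u := by
    intro i u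
    simp only [hqdef]
    split_ifs
    · exact quant_nonneg ℙ (fun ω => X ω i) u
    · exact le_rfl
  have hWpos : ∀ ω i', 0 ≤ W ω i' := fun ω i' => hqpos i' (U ω)
  have hqmonoIoo : ∀ i, MonotoneOn (q i) (Set.Ioo 0 1) := by
    intro i u hu v hv huv
    simp only [hqdef, hu, hv, if_true]
    exact hGmono i hu hv huv
  have haeIoo : ∀ᵐ ω ∂ℙ, U ω ∈ Set.Ioo (0:ℝ) 1 := ae_U_Ioo ℙ hUm hU
  have hZWae : ∀ᵐ ω ∂ℙ, Z ω = W ω := by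
    filter_upwards [haeIoo] with ω hω
    funext i
    rw [hZ ω i]
    show _ = q i (U ω)
    simp only [hqdef, hGdef]
    rw [if_pos hω]
  have hmap : ∀ i, Measure.map (fun ω => W ω i) ℙ = Measure.map (fun ω => X ω i) ℙ := by
    intro i
    have h0 := map_clip_quant ℙ U hUm hU (fun ω => X ω i) (hXim i) (fun ω => hXpos ω i)
    rw [hWdef, hqdef, hGdef]
    exact h0
  have htrans : ∀ i (φ : ℝ → ℝ), Measurable φ →
      (∫ ω, φ (W ω i) ∂ℙ) = ∫ ω, φ (X ω i) ∂ℙ := fun i φ hφ =>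
    integral_comp_eq_of_map_eq (hWim i) (hXim i) (hmap i) φ hφ
  -- main induction: increasing-concave comparison of iterates
  have H : ∀ (k : ℕ) (i : Fin n) (c : ℝ),
      (∫ ω, min c (iterP L k (W ω) i) ∂ℙ) ≤ ∫ ω, min c (iterP L k (X ω) i) ∂ℙ := by
    intro k
    induction k with
    | zero => intro i c; simp [iterP]
    | succ k IH =>
      intro i c
      set A : Fin (n+1) → ℝ → ℝ :=
        Fin.cons (q i) (fun j u => relLiab L j i * iterP L k (fun i' => q i' u) j) with hA
      set B : Fin (n+1) → Ω → ℝ :=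
        Fin.cons (fun ω => X ω i) (fun j ω => relLiab L j i * iterP L k (X ω) j) with hB
      have hAmono : ∀ j, MonotoneOn (A j) (Set.Ioo 0 1) := by
        intro j
        refine Fin.cases ?_ ?_ j
        · simp only [hA, Fin.cons_zero]; exact hqmonoIoo i
        · intro j' u hu v hv huv
          simp only [hA, Fin.cons_succ]
          exact mul_le_mul_of_nonneg_left
            (iterP_mono hL (fun i' => hqmonoIoo i' hu hv huv) k j') (hpi0 j' i)
      have hApos : ∀ j, ∀ u ∈ Set.Ioo (0:ℝ) 1, 0 ≤ A j u := by
        intro j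
        refine Fin.cases ?_ ?_ j
        · intro u _; simp only [hA, Fin.cons_zero]; exact hqpos i u
        · intro j' u _
          simp only [hA, Fin.cons_succ]
          exact mul_nonneg (hpi0 j' i) (iterP_nonneg hL (fun i' => hqpos i' u) k j')
      have hAm : ∀ j, Measurable fun ω => A j (U ω) := by
        intro j
        refine Fin.cases ?_ ?_ j
        · simp only [hA, Fin.cons_zero]; exact hWim i
        · intro j'
          simp only [hA, Fin.cons_succ]
          exact (((iterP_measurable k j').comp hWm).const_mul _ :
            Measurable fun ω => relLiab L j' i * iterP L k (W ω) j')
      have hBm : ∀ j, Measurable (B j) := by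
        intro j
        refine Fin.cases ?_ ?_ j
        · simp only [hB, Fin.cons_zero]; exact hXim i
        · intro j'
          simp only [hB, Fin.cons_succ]
          exact ((iterP_measurable k j').comp hXm).const_mul _
      have hBpos : ∀ j ω, 0 ≤ B j ω := by
        intro j
        refine Fin.cases ?_ ?_ j
        · intro ω; simp only [hB, Fin.cons_zero]; exact hXpos ω i
        · intro j' ω
          simp only [hB, Fin.cons_succ]
          exact mul_nonneg (hpi0 j' i) (iterP_nonneg hL (fun i' => hXpos ω i') k j')
      have hmarg : ∀ j (c' : ℝ),
          (∫ ω, min c' (A j (U ω)) ∂ℙ) ≤ ∫ ω, min c' (B j ω) ∂ℙ := by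
        intro j
        refine Fin.cases ?_ ?_ j
        · intro c'
          simp only [hA, hB, Fin.cons_zero]
          exact le_of_eq (htrans i (fun s => min c' s) (measurable_const.min measurable_id))
        · intro j' c'
          simp only [hA, hB, Fin.cons_succ]
          rcases eq_or_lt_of_le (hpi0 j' i) with hzero | hposπ
          · simp only [← hzero, zero_mul]
            exact le_rfl
          · have hne : relLiab L j' i ≠ 0 := ne_of_gt hposπ
            have hrwW : ∀ ω, min c' (relLiab L j' i * iterP L k (W ω) j')
                = relLiab L j' i * min (c' / relLiab L j' i) (iterP L k (W ω) j') := by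
              intro ω
              rw [mul_min_of_nonneg _ _ hposπ.le, mul_div_cancel₀ _ hne]
            have hrwX : ∀ ω, min c' (relLiab L j' i * iterP L k (X ω) j')
                = relLiab L j' i * min (c' / relLiab L j' i) (iterP L k (X ω) j') := by
              intro ω
              rw [mul_min_of_nonneg _ _ hposπ.le, mul_div_cancel₀ _ hne]
            calc (∫ ω, min c' (relLiab L j' i * iterP L k (fun i' => q i' (U ω)) j') ∂ℙ)
                = relLiab L j' i * ∫ ω, min (c' / relLiab L j' i) (iterP L k (W ω) j') ∂ℙ := by
                  rw [← integral_const_mul]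
                  exact integral_congr_ae (Filter.Eventually.of_forall fun ω => hrwW ω)
              _ ≤ relLiab L j' i * ∫ ω, min (c' / relLiab L j' i) (iterP L k (X ω) j') ∂ℙ :=
                  mul_le_mul_of_nonneg_left (IH j' (c' / relLiab L j' i)) hposπ.le
              _ = ∫ ω, min c' (relLiab L j' i * iterP L k (X ω) j') ∂ℙ := by
                  rw [← integral_const_mul]
                  exact integral_congr_ae (Filter.Eventually.of_forall fun ω => (hrwX ω).symm)
      have key := step_int ℙ U hUm hU (Nat.succ_pos n) A hAmono hApos hAm B hBm hBpos hmarg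
        (min c (pbar L i))
      have e1 : (∫ ω, min c (iterP L (k+1) (W ω) i) ∂ℙ)
          = ∫ ω, min (min c (pbar L i)) (∑ j, A j (U ω)) ∂ℙ := by
        refine integral_congr_ae (Filter.Eventually.of_forall fun ω => ?_)
        show min c (iterP L (k+1) (W ω) i) = _
        simp only [iterP, hA, Fin.sum_univ_succ, Fin.cons_zero, Fin.cons_succ, ← min_assoc]
        rfl
      have e2 : (∫ ω, min c (iterP L (k+1) (X ω) i) ∂ℙ)
          = ∫ ω, min (min c (pbar L i)) (∑ j, B j ω) ∂ℙ := by
        refine integral_congr_ae (Filter.Eventually.of_forall fun ω => ?_)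
        show min c (iterP L (k+1) (X ω) i) = _
        simp only [iterP, hB, Fin.sum_univ_succ, Fin.cons_zero, Fin.cons_succ, ← min_assoc]
      rw [e1, e2]
      exact key
  -- expectation comparison for iterates
  have HE : ∀ (k : ℕ) (i : Fin n),
      (∫ ω, iterP L k (W ω) i ∂ℙ) ≤ ∫ ω, iterP L k (X ω) i ∂ℙ := by
    intro k i
    have h0 := H k i (pbar L i)
    have e : ∀ (x : Fin n → ℝ), min (pbar L i) (iterP L k x i) = iterP L k x i := fun x =>
      min_eq_right (iterP_le_pbar k i)
    simpa only [e] using h0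
  -- approximation of P by iterates
  have happrox : ∀ (x : Fin n → ℝ), (∀ i', 0 ≤ x i') → ∀ (k : ℕ) (i' : Fin n),
      |iterP L k x i' - P x i'| ≤ κ^k * C := by
    intro x hx k i'
    obtain ⟨⟨hbnd, hfix⟩, -⟩ := hP x hx
    refine le_trans ?_ (iterP_approx hL hfix hbnd hκj hκ0 k)
    exact Finset.single_le_sum (f := fun i'' => |iterP L k x i'' - P x i''|)
      (fun i'' _ => abs_nonneg _) (Finset.mem_univ i')
  have hPWb : ∀ ω i', 0 ≤ P (W ω) i' ∧ P (W ω) i' ≤ pbar L i' := fun ω i' =>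
    (hP (W ω) (hWpos ω)).1.1 i'
  have hPXb : ∀ ω i', 0 ≤ P (X ω) i' ∧ P (X ω) i' ≤ pbar L i' := fun ω i' =>
    (hP (X ω) (fun i' => hXpos ω i')).1.1 i'
  have hκCz : Filter.Tendsto (fun k : ℕ => κ^k * C) Filter.atTop (nhds 0) := by
    simpa using (tendsto_pow_atTop_nhds_zero_of_lt_one hκ0 hκlt).mul_const C
  have htendW : ∀ ω i', Filter.Tendsto (fun k => iterP L k (W ω) i') Filter.atTop
      (nhds (P (W ω) i')) := by
    intro ω i'
    rw [tendsto_iff_dist_tendsto_zero]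
    refine squeeze_zero (fun k => dist_nonneg) (fun k => ?_) hκCz
    rw [Real.dist_eq]
    exact happrox (W ω) (hWpos ω) k i'
  have htendX : ∀ ω i', Filter.Tendsto (fun k => iterP L k (X ω) i') Filter.atTop
      (nhds (P (X ω) i')) := by
    intro ω i'
    rw [tendsto_iff_dist_tendsto_zero]
    refine squeeze_zero (fun k => dist_nonneg) (fun k => ?_) hκCz
    rw [Real.dist_eq]
    exact happrox (X ω) (fun i'' => hXpos ω i'') k i'
  have hPWm : ∀ i', Measurable fun ω => P (W ω) i' := by
    intro i'
    refine measurable_of_tendsto_metrizable (f := fun k ω => iterP L k (W ω) i')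
      (fun k => ((iterP_measurable k i').comp hWm)) ?_
    rw [tendsto_pi_nhds]
    exact fun ω => htendW ω i'
  have hPXm : ∀ i', Measurable fun ω => P (X ω) i' := by
    intro i'
    refine measurable_of_tendsto_metrizable (f := fun k ω => iterP L k (X ω) i')
      (fun k => ((iterP_measurable k i').comp hXm)) ?_
    rw [tendsto_pi_nhds]
    exact fun ω => htendX ω i'
  have hPWint : ∀ i', Integrable (fun ω => P (W ω) i') ℙ := by
    intro i'
    refine Integrable.mono' (integrable_const (pbar L i')) (hPWm i').aestronglyMeasurable
      (Filter.Eventually.of_forall fun ω => ?_)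
    rw [Real.norm_eq_abs, abs_of_nonneg (hPWb ω i').1]
    exact (hPWb ω i').2
  have hPXint : ∀ i', Integrable (fun ω => P (X ω) i') ℙ := by
    intro i'
    refine Integrable.mono' (integrable_const (pbar L i')) (hPXm i').aestronglyMeasurable
      (Filter.Eventually.of_forall fun ω => ?_)
    rw [Real.norm_eq_abs, abs_of_nonneg (hPXb ω i').1]
    exact (hPXb ω i').2
  have hiterWint : ∀ (k : ℕ) (i' : Fin n), Integrable (fun ω => iterP L k (W ω) i') ℙ := by
    intro k i'
    refine Integrable.mono' (integrable_const (pbar L i'))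
      (((iterP_measurable k i').comp hWm)).aestronglyMeasurable
      (Filter.Eventually.of_forall fun ω => ?_)
    rw [Real.norm_eq_abs, abs_of_nonneg (iterP_nonneg hL (hWpos ω) k i')]
    exact iterP_le_pbar k i'
  have hiterXint : ∀ (k : ℕ) (i' : Fin n), Integrable (fun ω => iterP L k (X ω) i') ℙ := by
    intro k i'
    refine Integrable.mono' (integrable_const (pbar L i'))
      (((iterP_measurable k i').comp hXm)).aestronglyMeasurable
      (Filter.Eventually.of_forall fun ω => ?_)
    rw [Real.norm_eq_abs, abs_of_nonneg (iterP_nonneg hL (fun i'' => hXpos ω i'') k i')]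
    exact iterP_le_pbar k i'
  -- the limit comparison
  have h2 : ∀ i', (∫ ω, P (W ω) i' ∂ℙ) ≤ ∫ ω, P (X ω) i' ∂ℙ := by
    intro i'
    have key : ∀ k : ℕ,
        (∫ ω, P (W ω) i' ∂ℙ) ≤ (∫ ω, P (X ω) i' ∂ℙ) + 2*(κ^k*C) := by
      intro k
      have b1 : (∫ ω, P (W ω) i' ∂ℙ) ≤ (∫ ω, iterP L k (W ω) i' ∂ℙ) + κ^k*C := by
        have hb : (∫ ω, P (W ω) i' ∂ℙ) ≤ ∫ ω, (iterP L k (W ω) i' + κ^k*C) ∂ℙ := by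
          refine integral_mono (hPWint i') ((hiterWint k i').add (integrable_const _))
            fun ω => ?_
          have habs := abs_le.1 (happrox (W ω) (hWpos ω) k i')
          simp only []
          linarith [habs.1]
        rwa [integral_add (hiterWint k i') (integrable_const _), integral_const, probReal_univ,
          one_smul] at hb
      have b2 : (∫ ω, iterP L k (X ω) i' ∂ℙ) ≤ (∫ ω, P (X ω) i' ∂ℙ) + κ^k*C := by
        have hb : (∫ ω, iterP L k (X ω) i' ∂ℙ) ≤ ∫ ω, (P (X ω) i' + κ^k*C) ∂ℙ := by
          refine integral_mono (hiterXint k i') ((hPXint i').add (integrable_const _))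
            fun ω => ?_
          have habs := abs_le.1 (happrox (X ω) (fun i'' => hXpos ω i'') k i')
          simp only []
          linarith [habs.2]
        rwa [integral_add (hPXint i') (integrable_const _), integral_const, probReal_univ,
          one_smul] at hb
      have hHE := HE k i'
      linarith
    refine le_of_forall_pos_le_add fun ε hε => ?_
    have hκC2 : Filter.Tendsto (fun k : ℕ => 2*(κ^k*C)) Filter.atTop (nhds 0) := by
      simpa using hκCz.const_mul 2
    obtain ⟨k, hk⟩ := (hκC2.eventually (gt_mem_nhds hε)).exists
    exact le_trans (key k) (by linarith)
  -- transfers between Z and W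
  have hPZW : ∀ j, (∫ ω, P (Z ω) j ∂ℙ) = ∫ ω, P (W ω) j ∂ℙ := by
    intro j
    refine integral_congr_ae ?_
    filter_upwards [hZWae] with ω hω
    rw [hω]
  have hZiW : ∀ i', (∫ ω, Z ω i' ∂ℙ) = ∫ ω, W ω i' ∂ℙ := by
    intro i'
    refine integral_congr_ae ?_
    filter_upwards [hZWae] with ω hω
    rw [hω]
  have hWint : ∀ i', Integrable (fun ω => W ω i') ℙ := fun i' =>
    integrable_comp_of_map_eq (hWim i') (hXim i') (hmap i') (hXint i')
  have hZint : ∀ i', Integrable (fun ω => Z ω i') ℙ := by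
    intro i'
    refine (hWint i').congr ?_
    filter_upwards [hZWae] with ω hω
    rw [hω]
  have hPZint : ∀ j, Integrable (fun ω => P (Z ω) j) ℙ := by
    intro j
    refine (hPWint j).congr ?_
    filter_upwards [hZWae] with ω hω
    rw [hω]
  have hEWX : ∀ i', (∫ ω, W ω i' ∂ℙ) = ∫ ω, X ω i' ∂ℙ := fun i' =>
    htrans i' (fun s => s) measurable_id
  intro i
  have hintsumZ : Integrable (fun ω => ∑ j, relLiab L j i * P (Z ω) j) ℙ :=
    integrable_finset_sum _ fun j _ => ((hPZint j).const_mul _)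
  have haddZ : Integrable (fun ω => Z ω i + ∑ j, relLiab L j i * P (Z ω) j) ℙ := by
    have := (hZint i).add hintsumZ
    exact this
  have hsplitZ : (∫ ω, (Z ω i + (∑ j, relLiab L j i * P (Z ω) j) - pbar L i) ∂ℙ)
      = (∫ ω, Z ω i ∂ℙ) + (∑ j, relLiab L j i * ∫ ω, P (Z ω) j ∂ℙ) - pbar L i := by
    rw [integral_sub haddZ (integrable_const _),
      integral_add (hZint i) hintsumZ,
      integral_finset_sum _ (fun j _ => (hPZint j).const_mul _),
      integral_const, probReal_univ, one_smul]
    congr 1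
    congr 1
    exact Finset.sum_congr rfl fun j _ => integral_const_mul _ _
  have hintsumX : Integrable (fun ω => ∑ j, relLiab L j i * P (X ω) j) ℙ :=
    integrable_finset_sum _ fun j _ => ((hPXint j).const_mul _)
  have haddX : Integrable (fun ω => X ω i + ∑ j, relLiab L j i * P (X ω) j) ℙ := by
    have := (hXint i).add hintsumX
    exact this
  have hsplitX : (∫ ω, (X ω i + (∑ j, relLiab L j i * P (X ω) j) - pbar L i) ∂ℙ)
      = (∫ ω, X ω i ∂ℙ) + (∑ j, relLiab L j i * ∫ ω, P (X ω) j ∂ℙ) - pbar L i := by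
    rw [integral_sub haddX (integrable_const _),
      integral_add (hXint i) hintsumX,
      integral_finset_sum _ (fun j _ => (hPXint j).const_mul _),
      integral_const, probReal_univ, one_smul]
    congr 1
    congr 1
    exact Finset.sum_congr rfl fun j _ => integral_const_mul _ _
  constructor
  · rw [hsplitZ, hsplitX, hZiW i, hEWX i]
    have hsum_le : (∑ j, relLiab L j i * ∫ ω, P (Z ω) j ∂ℙ)
        ≤ ∑ j, relLiab L j i * ∫ ω, P (X ω) j ∂ℙ := by
      refine Finset.sum_le_sum fun j _ => mul_le_mul_of_nonneg_left ?_ (hpi0 j i)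
      rw [hPZW j]
      exact h2 j
    linarith
  · rw [hPZW i]
    exact h2 i
end
end

section
/- In the Eisenberg–Noe setting (α_x = α_L = 1) under the regularity assumption (p̄_i > 0 and Σ_{j=1}^n π_{ij} < 1 for every i ≤ n), let X : Ω → ℝⁿ₊ be an integrable random endowment vector and let U be a random variable uniformly distributed on [0,1] on the same probability space such that the conditional expectation 𝔼[X | σ(U)] is almost surely a nondecreasing function of U in every component (i.e., is comonotonic). Then for every bank i ≤ n: 𝔼[V_i(X)] ≤ 𝔼[V_i(𝔼[X | σ(U)])] and 𝔼[p_i(X)] ≤ 𝔼[p_i(𝔼[X | σ(U)])]. -/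
open Matrix BigOperators MeasureTheory

noncomputable section

namespace ENaux

variable {n : ℕ} (L : Matrix (Fin n) (Fin (n + 1)) ℝ)

/-- The clearing map `Φ_z(q)_i = min(p̄_i, z_i + Σ_j π_{ji} q_j)`. -/
def Phi (z q : Fin n → ℝ) (i : Fin n) : ℝ :=
  min (pbar L i) (z i + ∑ j, relLiab L j i * q j)

lemma relLiab_nonneg (hL : ∀ i j, 0 ≤ L i j) (i j : Fin n) : 0 ≤ relLiab L i j := by
  unfold relLiab
  split
  · exact div_nonneg (hL _ _) (le_of_lt ‹_›)
  · exact le_rfl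

lemma Phi_mono (hπ : ∀ i j, 0 ≤ relLiab L i j) {z q q' : Fin n → ℝ}
    (h : ∀ i, q i ≤ q' i) (i : Fin n) : Phi L z q i ≤ Phi L z q' i :=
  min_le_min le_rfl (add_le_add le_rfl
    (Finset.sum_le_sum fun j _ => mul_le_mul_of_nonneg_left (h j) (hπ j i)))

/-- Knaster–Tarski: any nonnegative sub-fixed point of `Φ_z` is dominated by the greatest
clearing payment vector. -/
lemma subfixed_le_greatest (hπ : ∀ i j, 0 ≤ relLiab L i j) (hpb : ∀ i, 0 < pbar L i)
    {z p r : Fin n → ℝ} (hz : ∀ i, 0 ≤ z i)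
    (hgp : IsGreatestClearingPayment L z p)
    (hr0 : ∀ i, 0 ≤ r i) (hrs : ∀ i, r i ≤ Phi L z r i) : ∀ i, r i ≤ p i := by
  set s : ℕ → Fin n → ℝ := fun k => (Phi L z)^[k] r with hs
  have hsucc : ∀ k, s (k + 1) = Phi L z (s k) := fun k => Function.iterate_succ_apply' _ _ _
  have hstep : ∀ k i, s k i ≤ s (k + 1) i := by
    intro k
    induction k with
    | zero => simpa [hs] using hrs
    | succ k ih =>
      intro i
      rw [hsucc, hsucc]
      exact Phi_mono L hπ ih i
  have hmono : ∀ i, Monotone fun k => s k i := fun i =>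
    monotone_nat_of_le_succ fun k => hstep k i
  have hub : ∀ k i, s k i ≤ pbar L i := by
    intro k i
    cases k with
    | zero => exact le_trans (hrs i) (min_le_left _ _)
    | succ k => rw [hsucc]; exact min_le_left _ _
  have hbdd : ∀ i, BddAbove (Set.range fun k => s k i) := by
    intro i
    refine ⟨pbar L i, ?_⟩
    rintro _ ⟨k, rfl⟩
    exact hub k i
  set q : Fin n → ℝ := fun i => ⨆ k, s k i with hq
  have htend : ∀ i, Filter.Tendsto (fun k => s k i) Filter.atTop (nhds (q i)) := fun i =>
    tendsto_atTop_ciSup (hmono i) (hbdd i)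
  have hfix : ∀ i, q i = min (pbar L i) (z i + ∑ j, relLiab L j i * q j) := by
    intro i
    have h1 : Filter.Tendsto (fun k => s (k + 1) i) Filter.atTop (nhds (q i)) :=
      (htend i).comp (Filter.tendsto_add_atTop_nat 1)
    have h2 : Filter.Tendsto (fun k => s (k + 1) i) Filter.atTop
        (nhds (min (pbar L i) (z i + ∑ j, relLiab L j i * q j))) := by
      simp only [hsucc, Phi]
      exact Filter.Tendsto.min tendsto_const_nhds
        (Filter.Tendsto.const_add _ (tendsto_finset_sum _ fun j _ => (htend j).const_mul _))
    exact tendsto_nhds_unique h1 h2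
  have hr0q : ∀ i, r i ≤ q i := fun i => le_ciSup (hbdd i) 0
  have hmem : q ∈ {q : Fin n → ℝ | (∀ i, 0 ≤ q i ∧ q i ≤ pbar L i) ∧
      ∀ i, q i = min (pbar L i) (z i + ∑ j, relLiab L j i * q j)} := by
    refine ⟨fun i => ⟨le_trans (hr0 i) (hr0q i), ciSup_le fun k => hub k i⟩, hfix⟩
  have hqp := hgp.2 hmem
  exact fun i => le_trans (hr0q i) (hqp i)

/-- The greatest clearing payment is the pointwise infimum of the iterates of `Φ_x`
started at `p̄`. -/
lemma greatest_eq_iInf (hπ : ∀ i j, 0 ≤ relLiab L i j) (hpb : ∀ i, 0 < pbar L i)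
    {x p : Fin n → ℝ} (hx : ∀ i, 0 ≤ x i)
    (hgp : IsGreatestClearingPayment L x p) :
    ∀ i, p i = ⨅ k, (Phi L x)^[k] (pbar L) i := by
  set s : ℕ → Fin n → ℝ := fun k => (Phi L x)^[k] (pbar L) with hs
  have hsucc : ∀ k, s (k + 1) = Phi L x (s k) := fun k => Function.iterate_succ_apply' _ _ _
  have h0 : ∀ k i, 0 ≤ s k i := by
    intro k
    induction k with
    | zero => exact fun i => (hpb i).le
    | succ k ih =>
      intro i
      rw [hsucc]
      exact le_min (hpb i).le
        (add_nonneg (hx i) (Finset.sum_nonneg fun j _ => mul_nonneg (hπ j i) (ih j)))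
  have hstep : ∀ k i, s (k + 1) i ≤ s k i := by
    intro k
    induction k with
    | zero =>
      intro i
      rw [hsucc]
      exact min_le_left _ _
    | succ k ih =>
      intro i
      calc s (k + 1 + 1) i = Phi L x (s (k + 1)) i := by rw [hsucc]
        _ ≤ Phi L x (s k) i := Phi_mono L hπ ih i
        _ = s (k + 1) i := by rw [hsucc]
  have hanti : ∀ i, Antitone fun k => s k i := fun i =>
    antitone_nat_of_succ_le fun k => hstep k i
  have hbdd : ∀ i, BddBelow (Set.range fun k => s k i) := by
    intro i
    refine ⟨0, ?_⟩
    rintro _ ⟨k, rfl⟩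
    exact h0 k i
  set q : Fin n → ℝ := fun i => ⨅ k, s k i with hq
  have htend : ∀ i, Filter.Tendsto (fun k => s k i) Filter.atTop (nhds (q i)) := fun i =>
    tendsto_atTop_ciInf (hanti i) (hbdd i)
  have hfix : ∀ i, q i = min (pbar L i) (x i + ∑ j, relLiab L j i * q j) := by
    intro i
    have h1 : Filter.Tendsto (fun k => s (k + 1) i) Filter.atTop (nhds (q i)) :=
      (htend i).comp (Filter.tendsto_add_atTop_nat 1)
    have h2 : Filter.Tendsto (fun k => s (k + 1) i) Filter.atTop
        (nhds (min (pbar L i) (x i + ∑ j, relLiab L j i * q j))) := by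
      simp only [hsucc, Phi]
      exact Filter.Tendsto.min tendsto_const_nhds
        (Filter.Tendsto.const_add _ (tendsto_finset_sum _ fun j _ => (htend j).const_mul _))
    exact tendsto_nhds_unique h1 h2
  have hmem : q ∈ {q : Fin n → ℝ | (∀ i, 0 ≤ q i ∧ q i ≤ pbar L i) ∧
      ∀ i, q i = min (pbar L i) (x i + ∑ j, relLiab L j i * q j)} := by
    refine ⟨fun i => ⟨le_ciInf fun k => h0 k i, ?_⟩, hfix⟩
    exact le_trans (ciInf_le (hbdd i) 0) le_rfl
  have hqp := hgp.2 hmem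
  -- the other direction: p ≤ s k for all k
  have hps : ∀ k i, p i ≤ s k i := by
    intro k
    induction k with
    | zero => exact fun i => (hgp.1.1 i).2
    | succ k ih =>
      intro i
      rw [hsucc]
      calc p i = Phi L x p i := hgp.1.2 i
        _ ≤ Phi L x (s k) i := Phi_mono L hπ ih i
  intro i
  exact le_antisymm (le_ciInf fun k => hps k i) (hqp i)

end ENaux

open ENaux

/-- In the Eisenberg–Noe setting under the regularity assumption, let `X` be an integrable
random endowment vector and `U` uniform on `[0,1]` such that `𝔼[X | σ(U)]` is almost surely a
nondecreasing function of `U` in every component (comonotonic).  Then for every bank `i`: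
`𝔼[V_i(X)] ≤ 𝔼[V_i(𝔼[X|σ(U)])]` and `𝔼[p_i(X)] ≤ 𝔼[p_i(𝔼[X|σ(U)])]`. -/
theorem conditional_jensen_upper_bound (n : ℕ) (hn : 1 ≤ n)
    (L : Matrix (Fin n) (Fin (n + 1)) ℝ)
    (hL : ∀ i j, 0 ≤ L i j) (hLdiag : ∀ i : Fin n, L i i.castSucc = 0)
    (hreg : ∀ i, 0 < pbar L i ∧ ∑ j, relLiab L i j < 1)
    (P : (Fin n → ℝ) → (Fin n → ℝ))
    (hP : ∀ x : Fin n → ℝ, (∀ i, 0 ≤ x i) → IsGreatestClearingPayment L x (P x))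
    (Ω : Type) (mΩ : MeasurableSpace Ω) (ℙ : Measure Ω) (hprob : IsProbabilityMeasure ℙ)
    (X : Ω → Fin n → ℝ) (hXm : Measurable X) (hXpos : ∀ ω i, 0 ≤ X ω i)
    (hXint : ∀ i, Integrable (fun ω => X ω i) ℙ)
    (U : Ω → ℝ) (hUm : Measurable U)
    (hU : ℙ.map U = volume.restrict (Set.Icc (0 : ℝ) 1))
    (Y : Ω → Fin n → ℝ)
    (hY : ∀ i, (fun ω => Y ω i)
      = MeasureTheory.condExp (MeasurableSpace.comap U (borel ℝ)) ℙ (fun ω => X ω i))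
    (hcomon : ∃ g : ℝ → Fin n → ℝ,
      (∀ i, MonotoneOn (fun u => g u i) (Set.Icc (0 : ℝ) 1))
      ∧ ∀ᵐ ω ∂ℙ, Y ω = g (U ω)) :
    ∀ i : Fin n,
      (∫ ω, (X ω i + (∑ j, relLiab L j i * P (X ω) j) - pbar L i) ∂ℙ
        ≤ ∫ ω, (Y ω i + (∑ j, relLiab L j i * P (Y ω) j) - pbar L i) ∂ℙ)
      ∧ (∫ ω, P (X ω) i ∂ℙ ≤ ∫ ω, P (Y ω) i ∂ℙ) := by
  have hπ : ∀ i j, 0 ≤ relLiab L i j := relLiab_nonneg L hL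
  have hpb : ∀ i, 0 < pbar L i := fun i => (hreg i).1
  have hm : MeasurableSpace.comap U (borel ℝ) ≤ mΩ := hUm.comap_le
  -- measurability of ω ↦ P (X ω) j
  have keyX : ∀ (k : ℕ) (j : Fin n),
      Measurable (fun ω => (Phi L (X ω))^[k] (pbar L) j) := by
    intro k
    induction k with
    | zero => intro j; simpa using measurable_const
    | succ k ih =>
      intro j
      have heq : (fun ω => (Phi L (X ω))^[k + 1] (pbar L) j)
          = fun ω => min (pbar L j)
              (X ω j + ∑ i, relLiab L i j * (Phi L (X ω))^[k] (pbar L) i) := by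
        funext ω
        rw [Function.iterate_succ_apply']
        rfl
      rw [heq]
      exact measurable_const.min
        (((measurable_pi_apply j).comp hXm).add
          (Finset.measurable_sum _ fun i _ => (ih i).const_mul _))
  have hPXm : ∀ j, Measurable (fun ω => P (X ω) j) := by
    intro j
    have hrep : (fun ω => P (X ω) j)
        = fun ω => ⨅ k, (Phi L (X ω))^[k] (pbar L) j := by
      funext ω
      exact greatest_eq_iInf L hπ hpb (hXpos ω) (hP _ (hXpos ω)) j
    rw [hrep]
    exact Measurable.iInf fun k => keyX k j
  have hPXbd : ∀ ω j, ‖P (X ω) j‖ ≤ pbar L j := by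
    intro ω j
    rw [Real.norm_eq_abs, abs_le]
    exact ⟨le_trans (neg_nonpos.2 (hpb j).le) ((hP _ (hXpos ω)).1.1 j).1,
      ((hP _ (hXpos ω)).1.1 j).2⟩
  have hPXint : ∀ j, Integrable (fun ω => P (X ω) j) ℙ := fun j =>
    Integrable.mono' (integrable_const (pbar L j)) (hPXm j).aestronglyMeasurable
      (Filter.Eventually.of_forall fun ω => hPXbd ω j)
  -- facts about Y
  have hYm : ∀ i, Measurable (fun ω => Y ω i) := by
    intro i
    rw [hY i]
    exact (stronglyMeasurable_condExp.mono hm).measurable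
  have hYint : ∀ i, Integrable (fun ω => Y ω i) ℙ := by
    intro i
    rw [hY i]
    exact integrable_condExp
  have hYpos : ∀ᵐ ω ∂ℙ, ∀ i, 0 ≤ Y ω i := by
    rw [MeasureTheory.ae_all_iff]
    intro i
    have : (0 : Ω → ℝ) ≤ᵐ[ℙ] MeasureTheory.condExp (MeasurableSpace.comap U (borel ℝ)) ℙ (fun ω => X ω i) :=
      condExp_nonneg (Filter.Eventually.of_forall fun ω => hXpos ω i)
    rw [← hY i] at this
    exact this
  -- the conditional expectations Q j of P (X ·) j
  set Q : Fin n → Ω → ℝ := fun j => MeasureTheory.condExp (MeasurableSpace.comap U (borel ℝ)) ℙ (fun ω => P (X ω) j) with hQdef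
  have hYeq : ∀ i, ∀ ω, Y ω i = MeasureTheory.condExp (MeasurableSpace.comap U (borel ℝ)) ℙ (fun ω => X ω i) ω := by
    intro i ω
    exact congrFun (hY i) ω
  have hQ0 : ∀ᵐ ω ∂ℙ, ∀ j, 0 ≤ Q j ω := by
    rw [MeasureTheory.ae_all_iff]
    intro j
    exact condExp_nonneg (Filter.Eventually.of_forall fun ω => ((hP _ (hXpos ω)).1.1 j).1)
  have hQub : ∀ᵐ ω ∂ℙ, ∀ j, Q j ω ≤ pbar L j := by
    rw [MeasureTheory.ae_all_iff]
    intro j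
    have h1 : Q j ≤ᵐ[ℙ] MeasureTheory.condExp (MeasurableSpace.comap U (borel ℝ)) ℙ (fun _ => pbar L j) :=
      condExp_mono (hPXint j) (integrable_const _)
        (Filter.Eventually.of_forall fun ω => ((hP _ (hXpos ω)).1.1 j).2)
    rw [condExp_const (μ := ℙ) hm (pbar L j)] at h1
    exact h1
  have hQlin : ∀ᵐ ω ∂ℙ, ∀ i, Q i ω ≤ Y ω i + ∑ j, relLiab L j i * Q j ω := by
    rw [MeasureTheory.ae_all_iff]
    intro i
    have hint2 : Integrable (fun ω => X ω i + ∑ j, relLiab L j i * P (X ω) j) ℙ :=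
      (hXint i).add (integrable_finset_sum _ fun j _ => (hPXint j).const_mul _)
    have h1 : Q i ≤ᵐ[ℙ]
        MeasureTheory.condExp (MeasurableSpace.comap U (borel ℝ)) ℙ (fun ω => X ω i + ∑ j, relLiab L j i * P (X ω) j) := by
      refine condExp_mono (hPXint i) hint2 (Filter.Eventually.of_forall fun ω => ?_)
      calc P (X ω) i = min (pbar L i) (X ω i + ∑ j, relLiab L j i * P (X ω) j) :=
            (hP _ (hXpos ω)).1.2 i
        _ ≤ X ω i + ∑ j, relLiab L j i * P (X ω) j := min_le_right _ _
    have hadd := condExp_add (μ := ℙ) (m := MeasurableSpace.comap U (borel ℝ))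
      (f := fun ω => X ω i) (g := fun ω => ∑ j, relLiab L j i * P (X ω) j) (hXint i)
      (integrable_finset_sum Finset.univ fun j _ => (hPXint j).const_mul _)
    have h3 := condExp_finset_sum (μ := ℙ) (m := MeasurableSpace.comap U (borel ℝ))
      (s := Finset.univ) (f := fun j ω => relLiab L j i * P (X ω) j)
      (fun j _ => (hPXint j).const_mul _)
    have h5 : ∀ᵐ ω ∂ℙ, ∀ j : Fin n,
        MeasureTheory.condExp (MeasurableSpace.comap U (borel ℝ)) ℙ
            (fun ω => relLiab L j i * P (X ω) j) ω
          = relLiab L j i * Q j ω := by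
      rw [MeasureTheory.ae_all_iff]
      intro j
      have hsm := condExp_smul (μ := ℙ) (m := MeasurableSpace.comap U (borel ℝ))
        (relLiab L j i) (fun ω => P (X ω) j)
      have he : (fun ω => relLiab L j i * P (X ω) j)
          = relLiab L j i • (fun ω => P (X ω) j) := by
        funext ω; simp [Pi.smul_apply, smul_eq_mul]
      rw [he]
      filter_upwards [hsm] with ω hω
      rw [hω]
      simp [hQdef, Pi.smul_apply, smul_eq_mul]
    have h2 : MeasureTheory.condExp (MeasurableSpace.comap U (borel ℝ)) ℙ (fun ω => X ω i + ∑ j, relLiab L j i * P (X ω) j)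
        =ᵐ[ℙ] fun ω =>
          MeasureTheory.condExp (MeasurableSpace.comap U (borel ℝ)) ℙ (fun ω => X ω i) ω
            + ∑ j, relLiab L j i * Q j ω := by
      filter_upwards [hadd, h3, h5] with ω haddω h3ω h5ω
      have e0 : (MeasureTheory.condExp (MeasurableSpace.comap U (borel ℝ)) ℙ
          (fun ω => X ω i + ∑ j, relLiab L j i * P (X ω) j)) ω
          = (MeasureTheory.condExp (MeasurableSpace.comap U (borel ℝ)) ℙ
          ((fun ω => X ω i) + fun ω => ∑ j, relLiab L j i * P (X ω) j)) ω := rfl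
      rw [e0, haddω]
      simp only [Pi.add_apply]
      congr 1
      have e1 : (fun ω => ∑ j, relLiab L j i * P (X ω) j)
          = ∑ j : Fin n, (fun ω => relLiab L j i * P (X ω) j) := by
        funext ω; simp
      rw [e1]
      have h3ω' : (MeasureTheory.condExp (MeasurableSpace.comap U (borel ℝ)) ℙ
          (∑ j : Fin n, fun ω => relLiab L j i * P (X ω) j)) ω
          = (∑ j : Fin n, MeasureTheory.condExp (MeasurableSpace.comap U (borel ℝ)) ℙ
            (fun ω => relLiab L j i * P (X ω) j)) ω := h3ω
      rw [h3ω']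
      simp only [Finset.sum_apply]
      exact Finset.sum_congr rfl fun j _ => h5ω j
    filter_upwards [h1, h2] with ω h1ω h2ω
    rw [h2ω] at h1ω
    rw [hYeq i ω]
    exact h1ω
  -- pointwise application of the Tarski lemma
  have hkey : ∀ᵐ ω ∂ℙ, ∀ j, Q j ω ≤ P (Y ω) j := by
    filter_upwards [hYpos, hQ0, hQub, hQlin] with ω hY0 hQ0ω hQubω hQlinω
    refine subfixed_le_greatest L hπ hpb hY0 (hP _ hY0) hQ0ω fun i => ?_
    exact le_min (hQubω i) (hQlinω i)
  -- integrability of P (Y ·) j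
  have keyY : ∀ (k : ℕ) (j : Fin n),
      Measurable (fun ω => (Phi L (Y ω))^[k] (pbar L) j) := by
    intro k
    induction k with
    | zero => intro j; simpa using measurable_const
    | succ k ih =>
      intro j
      have heq : (fun ω => (Phi L (Y ω))^[k + 1] (pbar L) j)
          = fun ω => min (pbar L j)
              (Y ω j + ∑ i, relLiab L i j * (Phi L (Y ω))^[k] (pbar L) i) := by
        funext ω
        rw [Function.iterate_succ_apply']
        rfl
      rw [heq]
      exact measurable_const.min
        ((hYm j).add (Finset.measurable_sum _ fun i _ => (ih i).const_mul _))
  have hPYm : ∀ j, AEStronglyMeasurable (fun ω => P (Y ω) j) ℙ := by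
    intro j
    have hGm : Measurable (fun ω => ⨅ k, (Phi L (Y ω))^[k] (pbar L) j) :=
      Measurable.iInf fun k => keyY k j
    refine hGm.aestronglyMeasurable.congr ?_
    filter_upwards [hYpos] with ω hY0
    exact (greatest_eq_iInf L hπ hpb hY0 (hP _ hY0) j).symm
  have hPYbd : ∀ᵐ ω ∂ℙ, ∀ j, ‖P (Y ω) j‖ ≤ pbar L j := by
    filter_upwards [hYpos] with ω hY0
    intro j
    rw [Real.norm_eq_abs, abs_le]
    exact ⟨le_trans (neg_nonpos.2 (hpb j).le) ((hP _ hY0).1.1 j).1, ((hP _ hY0).1.1 j).2⟩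
  have hPYint : ∀ j, Integrable (fun ω => P (Y ω) j) ℙ := by
    intro j
    refine Integrable.mono' (integrable_const (pbar L j)) (hPYm j) ?_
    filter_upwards [hPYbd] with ω hω using hω j
  -- the second inequality
  have hmain : ∀ j, ∫ ω, P (X ω) j ∂ℙ ≤ ∫ ω, P (Y ω) j ∂ℙ := by
    intro j
    have h1 : ∫ ω, P (X ω) j ∂ℙ = ∫ ω, Q j ω ∂ℙ :=
      (integral_condExp hm (f := fun ω => P (X ω) j)).symm
    rw [h1]
    refine integral_mono_ae integrable_condExp (hPYint j) ?_
    filter_upwards [hkey] with ω hω using hω j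
  have hXYint : ∀ i, ∫ ω, X ω i ∂ℙ = ∫ ω, Y ω i ∂ℙ := by
    intro i
    rw [hY i]
    exact (integral_condExp hm (f := fun ω => X ω i)).symm
  intro i
  refine ⟨?_, hmain i⟩
  have hsumintX : Integrable (fun ω => ∑ j, relLiab L j i * P (X ω) j) ℙ :=
    integrable_finset_sum _ fun j _ => (hPXint j).const_mul _
  have hsumintY : Integrable (fun ω => ∑ j, relLiab L j i * P (Y ω) j) ℙ :=
    integrable_finset_sum _ fun j _ => (hPYint j).const_mul _
  have e1 : ∫ ω, (X ω i + (∑ j, relLiab L j i * P (X ω) j) - pbar L i) ∂ℙ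
      = (∫ ω, X ω i ∂ℙ) + (∑ j, relLiab L j i * ∫ ω, P (X ω) j ∂ℙ) - pbar L i := by
    have hiX : Integrable (fun ω => X ω i + ∑ j, relLiab L j i * P (X ω) j) ℙ :=
      (hXint i).add hsumintX
    rw [integral_sub hiX (integrable_const _),
      integral_add (hXint i) hsumintX, integral_finset_sum _ fun j _ => (hPXint j).const_mul _]
    simp [integral_const, measure_univ, integral_const_mul]
  have e2 : ∫ ω, (Y ω i + (∑ j, relLiab L j i * P (Y ω) j) - pbar L i) ∂ℙ
      = (∫ ω, Y ω i ∂ℙ) + (∑ j, relLiab L j i * ∫ ω, P (Y ω) j ∂ℙ) - pbar L i := by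
    have hiY : Integrable (fun ω => Y ω i + ∑ j, relLiab L j i * P (Y ω) j) ℙ :=
      (hYint i).add hsumintY
    rw [integral_sub hiY (integrable_const _),
      integral_add (hYint i) hsumintY, integral_finset_sum _ fun j _ => (hPYint j).const_mul _]
    simp [integral_const, measure_univ, integral_const_mul]
  rw [e1, e2]
  refine sub_le_sub_right (add_le_add (le_of_eq (hXYint i)) ?_) _
  exact Finset.sum_le_sum fun j _ => mul_le_mul_of_nonneg_left (hmain j) (hπ j i)
end
end
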